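/- arXiv:1401.5408 — 8 statements merged into one kernel-verified Lean document; each statement's English description precedes it below -/
import Mathlib

section
/- Let m = (m_1,…,m_N) ∈ R^N and y = (y_1,…,y_N) ∈ R^N, and let λ > 0. Then m minimizes f(m) = (1/2)∑_{t=1}^N (y_t − m_t)^2 + λ ∑_{t=2}^N |m_t − m_{t−1}| if and only if: (i) |∑_{t=1}^k (m_t − y_t)| ≤ λ for all 1 ≤ k ≤ N−1; (ii) ∑_{t=1}^N m_t = ∑_{t=1}^N y_t; and (iii) for every index t with m_t ≠ m_{t−1}, ∑_{j=1}^{t−1}(m_j − y_j) = λ·sgn(m_t − m_{t−1}). -/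
open Finset

lemma flsa_abel_aux (y m d : ℕ → ℝ) (n : ℕ) :
    ∑ t ∈ Icc 1 n, (m t - y t) * d t
      = (∑ j ∈ Icc 1 n, (m j - y j)) * d n
        - ∑ t ∈ Icc 2 n, (∑ j ∈ Icc 1 (t-1), (m j - y j)) * (d t - d (t-1)) := by
  induction n with
  | zero => simp
  | succ n ih =>
    rcases Nat.eq_zero_or_pos n with rfl | hn
    · simp
    · rw [Finset.sum_Icc_succ_top (by omega : 1 ≤ n+1),
          Finset.sum_Icc_succ_top (by omega : 2 ≤ n+1),
          Finset.sum_Icc_succ_top (by omega : 1 ≤ n+1), ih]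
      simp only [Nat.add_sub_cancel]
      ring

lemma flsa_suff (N : ℕ) (y m : ℕ → ℝ) (lam : ℝ)
    (h1 : ∀ k, 1 ≤ k → k ≤ N - 1 → |∑ t ∈ Icc 1 k, (m t - y t)| ≤ lam)
    (h2 : ∑ t ∈ Icc 1 N, m t = ∑ t ∈ Icc 1 N, y t)
    (h3 : ∀ t, 2 ≤ t → t ≤ N → m t ≠ m (t - 1) →
         ∑ j ∈ Icc 1 (t - 1), (m j - y j) = lam * Real.sign (m t - m (t - 1)))
    (g : ℕ → ℝ) :
    (1 / 2) * ∑ t ∈ Icc 1 N, (y t - m t) ^ 2 + lam * ∑ t ∈ Icc 2 N, |m t - m (t - 1)|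
        ≤ (1 / 2) * ∑ t ∈ Icc 1 N, (y t - g t) ^ 2 + lam * ∑ t ∈ Icc 2 N, |g t - g (t - 1)| := by
  have hzN : (∑ j ∈ Icc 1 N, (m j - y j)) = 0 := by
    rw [Finset.sum_sub_distrib, h2, sub_self]
  have habel := flsa_abel_aux y m (fun t => g t - m t) N
  rw [hzN, zero_mul, zero_sub] at habel
  have hA : ∑ t ∈ Icc 1 N, (m t - y t) * (g t - m t)
      ≤ (1/2) * ∑ t ∈ Icc 1 N, (y t - g t) ^ 2 - (1/2) * ∑ t ∈ Icc 1 N, (y t - m t) ^ 2 := by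
    rw [Finset.mul_sum, Finset.mul_sum, ← Finset.sum_sub_distrib]
    apply Finset.sum_le_sum
    intro t _
    nlinarith [sq_nonneg (g t - m t)]
  have hB : ∑ t ∈ Icc 2 N, (∑ j ∈ Icc 1 (t-1), (m j - y j)) * ((g t - m t) - (g (t-1) - m (t-1)))
      ≤ lam * ∑ t ∈ Icc 2 N, |g t - g (t - 1)| - lam * ∑ t ∈ Icc 2 N, |m t - m (t - 1)| := by
    rw [Finset.mul_sum, Finset.mul_sum, ← Finset.sum_sub_distrib]
    apply Finset.sum_le_sum
    intro t ht
    simp only [Finset.mem_Icc] at ht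
    set w := ∑ j ∈ Icc 1 (t-1), (m j - y j) with hw
    have hw1 : |w| ≤ lam := h1 (t-1) (by omega) (by omega)
    have hwA : w * (g t - g (t-1)) ≤ lam * |g t - g (t-1)| := by
      calc w * (g t - g (t-1)) ≤ |w * (g t - g (t-1))| := le_abs_self _
        _ = |w| * |g t - g (t-1)| := abs_mul _ _
        _ ≤ lam * |g t - g (t-1)| := mul_le_mul_of_nonneg_right hw1 (abs_nonneg _)
    have hwB : w * (m t - m (t-1)) = lam * |m t - m (t-1)| := by
      by_cases hB0 : m t = m (t-1)
      · simp [hB0]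
      · rw [hw, h3 t ht.1 ht.2 hB0]
        have hb : m t - m (t-1) ≠ 0 := sub_ne_zero_of_ne hB0
        rcases hb.lt_or_gt with hb' | hb'
        · rw [Real.sign_of_neg hb', abs_of_neg hb']; ring
        · rw [Real.sign_of_pos hb', abs_of_pos hb']; ring
    have hrw : w * ((g t - m t) - (g (t-1) - m (t-1)))
        = w * (g t - g (t-1)) - w * (m t - m (t-1)) := by ring
    rw [hrw, hwB]
    linarith
  linarith [habel, hA, hB]

lemma flsa_key_pert (N : ℕ) (y m : ℕ → ℝ) (lam : ℝ)
    (hmin : ∀ g : ℕ → ℝ,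
      (1 / 2) * ∑ t ∈ Icc 1 N, (y t - m t) ^ 2 + lam * ∑ t ∈ Icc 2 N, |m t - m (t - 1)|
        ≤ (1 / 2) * ∑ t ∈ Icc 1 N, (y t - g t) ^ 2 + lam * ∑ t ∈ Icc 2 N, |g t - g (t - 1)|)
    (k : ℕ) (hk1 : 1 ≤ k) (hkN : k + 1 ≤ N) (ε : ℝ) :
    0 ≤ ε * (∑ j ∈ Icc 1 k, (m j - y j)) + (k:ℝ)/2 * ε^2
        + lam * (|m (k+1) - m k - ε| - |m (k+1) - m k|) := by
  set g : ℕ → ℝ := fun j => if j ≤ k then m j + ε else m j with hg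
  have h := hmin g
  have e1 : ∑ t ∈ Icc 1 N, (y t - g t)^2
      = ∑ t ∈ Icc 1 N, (y t - m t)^2 + (2*ε*(∑ j ∈ Icc 1 k, (m j - y j)) + (k:ℝ)*ε^2) := by
    have h0 : ∀ t ∈ Icc 1 N, (y t - g t)^2
        = (y t - m t)^2 + (if t ≤ k then 2*ε*(m t - y t) + ε^2 else 0) := by
      intro t ht
      by_cases htk : t ≤ k <;> simp only [hg, htk, if_true, if_false] <;> ring
    rw [Finset.sum_congr rfl h0, Finset.sum_add_distrib]
    congr 1
    rw [← Finset.sum_subset (Finset.Icc_subset_Icc_right (by omega : k ≤ N))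
        (fun x hx hnx => by
          simp only [Finset.mem_Icc] at hx hnx
          rw [if_neg (by omega)])]
    have h1 : ∀ t ∈ Icc 1 k, (if t ≤ k then 2*ε*(m t - y t) + ε^2 else 0)
        = 2*ε*(m t - y t) + ε^2 := by
      intro t ht
      simp only [Finset.mem_Icc] at ht
      rw [if_pos ht.2]
    rw [Finset.sum_congr rfl h1, Finset.sum_add_distrib, Finset.sum_const, ← Finset.mul_sum]
    simp [Nat.card_Icc, nsmul_eq_mul]
  have e2 : ∑ t ∈ Icc 2 N, |g t - g (t - 1)|
      = ∑ t ∈ Icc 2 N, |m t - m (t - 1)| + (|m (k+1) - m k - ε| - |m (k+1) - m k|) := by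
    have hd : ∑ t ∈ Icc 2 N, (|g t - g (t - 1)| - |m t - m (t - 1)|)
        = |m (k+1) - m k - ε| - |m (k+1) - m k| := by
      rw [Finset.sum_eq_single_of_mem (k+1) (Finset.mem_Icc.mpr ⟨by omega, by omega⟩)]
      · have hg1 : g (k+1) = m (k+1) := by simp only [hg]; rw [if_neg (by omega)]
        have hg2 : g (k+1-1) = m k + ε := by
          simp only [hg, Nat.add_sub_cancel]; rw [if_pos le_rfl]
        rw [hg1, hg2, Nat.add_sub_cancel]
        congr 2
        ring
      · intro t htmem htne
        simp only [Finset.mem_Icc] at htmem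
        by_cases htk : t ≤ k
        · have ha : g t = m t + ε := by simp only [hg]; rw [if_pos htk]
          have hb : g (t-1) = m (t-1) + ε := by simp only [hg]; rw [if_pos (by omega)]
          rw [ha, hb]
          have : m t + ε - (m (t-1) + ε) = m t - m (t-1) := by ring
          rw [this, sub_self]
        · have htk2 : k + 2 ≤ t := by omega
          have ha : g t = m t := by simp only [hg]; rw [if_neg htk]
          have hb : g (t-1) = m (t-1) := by simp only [hg]; rw [if_neg (by omega)]
          rw [ha, hb, sub_self]
    rw [← hd, Finset.sum_sub_distrib]
    ring
  rw [e1, e2] at h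
  nlinarith [h]

lemma flsa_cond_ii (N : ℕ) (hN : 1 ≤ N) (y m : ℕ → ℝ) (lam : ℝ)
    (hmin : ∀ g : ℕ → ℝ,
      (1 / 2) * ∑ t ∈ Icc 1 N, (y t - m t) ^ 2 + lam * ∑ t ∈ Icc 2 N, |m t - m (t - 1)|
        ≤ (1 / 2) * ∑ t ∈ Icc 1 N, (y t - g t) ^ 2 + lam * ∑ t ∈ Icc 2 N, |g t - g (t - 1)|) :
    ∑ t ∈ Icc 1 N, m t = ∑ t ∈ Icc 1 N, y t := by
  set S := ∑ t ∈ Icc 1 N, (m t - y t) with hS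
  have key2 : ∀ ε : ℝ, 0 ≤ ε * S + (N:ℝ)/2 * ε^2 := by
    intro ε
    have h := hmin (fun j => m j + ε)
    have e1 : ∑ t ∈ Icc 1 N, (y t - (m t + ε))^2
        = ∑ t ∈ Icc 1 N, (y t - m t)^2 + (2*ε*S + (N:ℝ)*ε^2) := by
      have h0 : ∀ t ∈ Icc 1 N, (y t - (m t + ε))^2
          = (y t - m t)^2 + (2*ε*(m t - y t) + ε^2) := by intro t _; ring
      rw [Finset.sum_congr rfl h0, Finset.sum_add_distrib, Finset.sum_add_distrib,
        Finset.sum_const, ← Finset.mul_sum]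
      simp [Nat.card_Icc, nsmul_eq_mul, hS]
    have e2 : ∑ t ∈ Icc 2 N, |m t + ε - (m (t-1) + ε)| = ∑ t ∈ Icc 2 N, |m t - m (t-1)| := by
      apply Finset.sum_congr rfl
      intro t _
      congr 1
      ring
    rw [e1, e2] at h
    nlinarith [h]
  have hSz : S = 0 := by
    by_contra hS0
    have hS2 : 0 < S^2 := by positivity
    have hNpos : (0:ℝ) < N := by exact_mod_cast hN
    have h0 := key2 (-S/(N:ℝ))
    have e : (-S/(N:ℝ)) * S + (N:ℝ)/2 * (-S/(N:ℝ))^2 = -S^2/(2*(N:ℝ)) := by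
      field_simp
      ring
    rw [e] at h0
    have : -S^2/(2*(N:ℝ)) < 0 := div_neg_of_neg_of_pos (by linarith) (by linarith)
    linarith
  have hdist := Finset.sum_sub_distrib (f := m) (g := y) (s := Icc 1 N)
  rw [← hS] at hdist
  linarith [hdist.symm.trans hSz]

lemma flsa_abs_le_of_pert (z a lam kr : ℝ) (hk : 1 ≤ kr) (hlam : 0 < lam)
    (K : ∀ ε : ℝ, 0 ≤ ε * z + kr/2 * ε^2 + lam * (|a - ε| - |a|)) : |z| ≤ lam := by
  have habs : ∀ ε : ℝ, |a - ε| - |a| ≤ |ε| := by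
    intro ε
    have h := abs_sub_abs_le_abs_sub (a - ε) a
    have h2 : a - ε - a = -ε := by ring
    rw [h2, abs_neg] at h
    exact h
  have K' : ∀ ε : ℝ, 0 ≤ ε * z + kr/2 * ε^2 + lam * |ε| := by
    intro ε
    have := K ε
    nlinarith [habs ε]
  have hk0 : (0:ℝ) < kr := by linarith
  rw [abs_le]
  constructor
  · by_contra hc
    push_neg at hc
    set ε := (-lam - z)/kr with hε
    have hεpos : 0 < ε := div_pos (by linarith) hk0
    have h := K' ε
    rw [abs_of_pos hεpos] at h
    have e : ε * z + kr/2 * ε^2 + lam * ε = -(z + lam)^2/(2*kr) := by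
      rw [hε]; field_simp; ring
    rw [e] at h
    have : -(z + lam)^2/(2*kr) < 0 :=
      div_neg_of_neg_of_pos (by nlinarith [sq_nonneg (z + lam)]) (by linarith)
    linarith
  · by_contra hc
    push_neg at hc
    set ε := -(z - lam)/kr with hε
    have hεneg : ε < 0 := div_neg_of_neg_of_pos (by linarith) hk0
    have h := K' ε
    rw [abs_of_neg hεneg] at h
    have e : ε * z + kr/2 * ε^2 + lam * (-ε) = -(z - lam)^2/(2*kr) := by
      rw [hε]; field_simp; ring
    rw [e] at h
    have : -(z - lam)^2/(2*kr) < 0 :=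
      div_neg_of_neg_of_pos (by nlinarith [sq_nonneg (z - lam)]) (by linarith)
    linarith

lemma flsa_eq_sign_of_pert (z a lam kr : ℝ) (hk : 1 ≤ kr) (hlam : 0 < lam) (ha : a ≠ 0)
    (K : ∀ ε : ℝ, 0 ≤ ε * z + kr/2 * ε^2 + lam * (|a - ε| - |a|)) :
    z = lam * Real.sign a := by
  have hsign : ∀ ε : ℝ, |ε| ≤ |a|/2 → |a - ε| - |a| = -(Real.sign a) * ε := by
    intro ε hε
    have hε' := abs_le.mp hε
    rcases ha.lt_or_gt with hneg | hpos
    · rw [Real.sign_of_neg hneg]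
      rw [abs_of_neg hneg] at hε' ⊢
      have h : a - ε < 0 := by linarith [hε'.1]
      rw [abs_of_neg h]
      ring
    · rw [Real.sign_of_pos hpos]
      rw [abs_of_pos hpos] at hε' ⊢
      have h : 0 < a - ε := by linarith [hε'.2]
      rw [abs_of_pos h]
      ring
  by_contra hzc
  set c := z - lam * Real.sign a with hc
  have hc0 : c ≠ 0 := sub_ne_zero_of_ne hzc
  have hc2 : 0 < c^2 := by positivity
  have hca : 0 < |c| := abs_pos.mpr hc0
  have haa : 0 < |a| := abs_pos.mpr ha
  have hk0 : (0:ℝ) < kr := by linarith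
  set δ := min (|a|/(2*|c|)) (1/kr) with hδ
  have hδpos : 0 < δ := lt_min (by positivity) (by positivity)
  set ε := -(c * δ) with hε
  have hεa : |ε| ≤ |a|/2 := by
    rw [hε, abs_neg, abs_mul, abs_of_pos hδpos]
    calc |c| * δ ≤ |c| * (|a|/(2*|c|)) :=
          mul_le_mul_of_nonneg_left (min_le_left _ _) (le_of_lt hca)
      _ = |a|/2 := by field_simp
  have hkδ : kr * δ ≤ 1 := by
    calc kr * δ ≤ kr * (1/kr) := mul_le_mul_of_nonneg_left (min_le_right _ _) (le_of_lt hk0)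
      _ = 1 := by field_simp
  have h := K ε
  rw [hsign ε hεa] at h
  have e : ε * z + kr/2 * ε^2 + lam * (-(Real.sign a) * ε)
      = -(c^2 * δ) + kr/2 * (c^2 * δ^2) := by
    rw [hε, hc]; ring
  rw [e] at h
  have hX : 0 < c^2*δ := mul_pos hc2 hδpos
  have hY : kr * (c^2*δ^2) ≤ c^2*δ := by
    calc kr*(c^2*δ^2) = (c^2*δ)*(kr*δ) := by ring
      _ ≤ (c^2*δ)*1 := mul_le_mul_of_nonneg_left hkδ hX.le
      _ = c^2*δ := mul_one _
  have h' : kr/2*(c^2*δ^2) = (1/2)*(kr*(c^2*δ^2)) := by ring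
  clear_value c δ ε
  linarith [h, hX, hY, h']

/-- KKT characterization of FLSA minimizers (1-indexed data `y 1, …, y N`). -/
theorem stmt2 (N : ℕ) (hN : 1 ≤ N) (y m : ℕ → ℝ) (lam : ℝ) (hlam : 0 < lam) :
    (∀ g : ℕ → ℝ,
      (1 / 2) * ∑ t ∈ Icc 1 N, (y t - m t) ^ 2 + lam * ∑ t ∈ Icc 2 N, |m t - m (t - 1)|
        ≤ (1 / 2) * ∑ t ∈ Icc 1 N, (y t - g t) ^ 2 + lam * ∑ t ∈ Icc 2 N, |g t - g (t - 1)|)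
    ↔ ((∀ k, 1 ≤ k → k ≤ N - 1 → |∑ t ∈ Icc 1 k, (m t - y t)| ≤ lam) ∧
       (∑ t ∈ Icc 1 N, m t = ∑ t ∈ Icc 1 N, y t) ∧
       (∀ t, 2 ≤ t → t ≤ N → m t ≠ m (t - 1) →
         ∑ j ∈ Icc 1 (t - 1), (m j - y j) = lam * Real.sign (m t - m (t - 1)))) := by
  constructor
  · intro hmin
    refine ⟨?_, flsa_cond_ii N hN y m lam hmin, ?_⟩
    · intro k hk1 hkN
      have hkr : (1:ℝ) ≤ (k:ℝ) := by exact_mod_cast hk1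
      exact flsa_abs_le_of_pert _ (m (k+1) - m k) lam (k:ℝ) hkr hlam
        (flsa_key_pert N y m lam hmin k hk1 (by omega))
    · intro t ht2 htN hne
      have hk1 : 1 ≤ t - 1 := by omega
      have hkr : (1:ℝ) ≤ ((t-1 : ℕ):ℝ) := by exact_mod_cast hk1
      have ha : m t - m (t-1) ≠ 0 := sub_ne_zero_of_ne hne
      have K := flsa_key_pert N y m lam hmin (t-1) hk1 (by omega)
      rw [(by omega : t - 1 + 1 = t)] at K
      exact flsa_eq_sign_of_pert _ (m t - m (t-1)) lam ((t-1 : ℕ):ℝ) hkr hlam ha K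
  · rintro ⟨h1, h2, h3⟩ g
    exact flsa_suff N y m lam h1 h2 h3 g
end

section
/- Let y ∈ R^N, let m̂ = (1/N)∑_{j=1}^N y_j, and define λ_max = max_{1≤k≤N−1} |∑_{j=1}^k (m̂ − y_j)|. If λ ≥ λ_max, then the constant vector m with m_t = m̂ for all t minimizes (1/2)∑_{t=1}^N (y_t − m_t)^2 + λ ∑_{t=2}^N |m_t − m_{t−1}|. -/
open Finset

private lemma abel_aux (a d : ℕ → ℝ) (n : ℕ) :
    ∑ t ∈ Icc 1 n, a t * d t
      = (∑ t ∈ Icc 1 (n - 1), (∑ j ∈ Icc 1 t, a j) * (d t - d (t + 1)))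
        + (∑ j ∈ Icc 1 n, a j) * d n := by
  induction n with
  | zero => simp
  | succ n ih =>
    rw [Finset.sum_Icc_succ_top (Nat.le_add_left 1 n), ih,
        show n + 1 - 1 = n from rfl,
        Finset.sum_Icc_succ_top (Nat.le_add_left 1 n) (f := a)]
    cases n with
    | zero => simp
    | succ m =>
      rw [show m + 1 - 1 = m from rfl,
          Finset.sum_Icc_succ_top (Nat.le_add_left 1 m)
            (f := fun t => (∑ j ∈ Icc 1 t, a j) * (d t - d (t + 1)))]
      ring

/-- if `λ ≥ λ_max = max_{1≤k≤N-1} |∑_{j=1}^k (m̂ - y_j)|` then the constant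
vector equal to the empirical mean `m̂` minimizes the FLSA objective. -/
theorem stmt3 (N : ℕ) (hN : 1 ≤ N) (y : ℕ → ℝ) (lam mhat : ℝ) (hlam : 0 < lam)
    (hmhat : mhat = (1 / (N : ℝ)) * ∑ j ∈ Icc 1 N, y j)
    (hlammax : ∀ k, 1 ≤ k → k ≤ N - 1 → |∑ j ∈ Icc 1 k, (mhat - y j)| ≤ lam) :
    ∀ g : ℕ → ℝ,
      (1 / 2) * ∑ t ∈ Icc 1 N, (y t - mhat) ^ 2 + lam * ∑ t ∈ Icc 2 N, |mhat - mhat|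
        ≤ (1 / 2) * ∑ t ∈ Icc 1 N, (y t - g t) ^ 2 + lam * ∑ t ∈ Icc 2 N, |g t - g (t - 1)| := by
  intro g
  have hNpos : (0 : ℝ) < N := by exact_mod_cast hN
  have hcard : (Icc 1 N).card = N := by rw [Nat.card_Icc]; omega
  -- S N = 0
  have hSN : ∑ j ∈ Icc 1 N, (mhat - y j) = 0 := by
    rw [Finset.sum_sub_distrib, Finset.sum_const, hcard, hmhat]
    rw [nsmul_eq_mul]
    field_simp
    ring
  -- reindex the TV term
  have hreindex : ∑ t ∈ Icc 2 N, |g t - g (t - 1)| =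
      ∑ t ∈ Icc 1 (N - 1), |g (t + 1) - g t| := by
    have himg : Icc 2 N = (Icc 1 (N - 1)).image (· + 1) := by
      rw [Finset.image_add_right_Icc]
      congr 1
      omega
    rw [himg, Finset.sum_image (fun x _ y _ h => by omega)]
    simp
  -- Abel summation
  have habel : ∑ t ∈ Icc 1 N, (mhat - y t) * (g t - mhat)
      = ∑ t ∈ Icc 1 (N - 1), (∑ j ∈ Icc 1 t, (mhat - y j)) * (g t - g (t + 1)) := by
    rw [abel_aux (fun t => mhat - y t) (fun t => g t - mhat) N, hSN, zero_mul, add_zero]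
    apply Finset.sum_congr rfl
    intro t _
    ring_nf
  -- bound the Abel sum
  have hbound : |∑ t ∈ Icc 1 N, (mhat - y t) * (g t - mhat)|
      ≤ lam * ∑ t ∈ Icc 1 (N - 1), |g (t + 1) - g t| := by
    rw [habel, Finset.mul_sum]
    refine (Finset.abs_sum_le_sum_abs _ _).trans (Finset.sum_le_sum ?_)
    intro t ht
    simp only [Finset.mem_Icc] at ht
    rw [abs_mul]
    have h1 : |∑ j ∈ Icc 1 t, (mhat - y j)| ≤ lam := hlammax t ht.1 ht.2
    have h2 : |g t - g (t + 1)| = |g (t + 1) - g t| := abs_sub_comm _ _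
    rw [h2]
    exact mul_le_mul_of_nonneg_right h1 (abs_nonneg _)
  -- pointwise convexity
  have hconv : ∀ t, (y t - mhat) ^ 2 + 2 * ((mhat - y t) * (g t - mhat)) ≤ (y t - g t) ^ 2 := by
    intro t; nlinarith [sq_nonneg (g t - mhat)]
  have hsum : ∑ t ∈ Icc 1 N, (y t - mhat) ^ 2 + 2 * ∑ t ∈ Icc 1 N, (mhat - y t) * (g t - mhat)
      ≤ ∑ t ∈ Icc 1 N, (y t - g t) ^ 2 := by
    rw [Finset.mul_sum, ← Finset.sum_add_distrib]
    exact Finset.sum_le_sum (fun t _ => hconv t)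
  have hA : -(lam * ∑ t ∈ Icc 1 (N - 1), |g (t + 1) - g t|)
      ≤ ∑ t ∈ Icc 1 N, (mhat - y t) * (g t - mhat) := by
    have := abs_le.mp (le_refl |∑ t ∈ Icc 1 N, (mhat - y t) * (g t - mhat)|)
    linarith [neg_abs_le (∑ t ∈ Icc 1 N, (mhat - y t) * (g t - mhat)), hbound]
  simp only [sub_self, abs_zero, Finset.sum_const_zero, mul_zero, add_zero]
  rw [hreindex]
  linarith [hsum, hA]
end

section
/- Suppose m ∈ R^N is an optimal solution of the fused lasso objective (1/2)∑_{t=1}^N (y_t − m_t)^2 + λ ∑_{t=2}^N |m_t − m_{t−1}|, with transition times 1 = t_0 < t_1 < ⋯ < t_{M−1} ≤ N (the indices t where m_t ≠ m_{t−1}) and signs s_k = sgn(m_{t_k} − m_{t_{k−1}}). Then m_1 = (1/(t_1 − 1)) ∑_{t=1}^{t_1 − 1} y_t + λ s_1/(t_1 − 1), and for k = 1,…,M−1, m_{t_k} = (1/(t_{k+1} − t_k)) ∑_{t=t_k}^{t_{k+1}−1} y_t + λ(s_{k+1} − s_k)/(t_{k+1} − t_k), where t_M := N+1 and s_M := 0.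 -/
open Finset

lemma abs_add_small (d e : ℝ) (hd : d ≠ 0) (h : |e| < |d|) :
    |d + e| = |d| + Real.sign d * e := by
  rcases lt_or_gt_of_ne hd with hneg | hpos
  · have h' := abs_lt.1 h
    rw [abs_of_neg hneg] at h'
    rw [Real.sign_of_neg hneg, abs_of_neg hneg, abs_of_neg (by linarith : d + e < 0)]
    ring
  · have h' := abs_lt.1 h
    rw [abs_of_pos hpos] at h'
    rw [Real.sign_of_pos hpos, abs_of_pos hpos, abs_of_pos (by linarith : 0 < d + e)]
    ring

lemma nonneg_quad (L A δ : ℝ) (hL : 0 < L) (hδ : 0 < δ)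
    (h : ∀ e : ℝ, e ≠ 0 → |e| < δ → 0 ≤ L / 2 * e ^ 2 + A * e) : A = 0 := by
  by_contra hA
  have habs : 0 < |A| := abs_pos.2 hA
  set c := min (δ / 2) (|A| / L) with hc
  have hc0 : 0 < c := lt_min (by linarith) (div_pos habs hL)
  have hcδ : c < δ := lt_of_le_of_lt (min_le_left _ _) (by linarith)
  have hcA : L * c ≤ |A| := by
    have h1 : c ≤ |A| / L := min_le_right _ _
    calc L * c ≤ L * (|A| / L) := by nlinarith
    _ = |A| := by field_simp
  rcases (lt_or_gt_of_ne hA) with hneg | hpos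
  · have hh := h c (ne_of_gt hc0) (by rwa [abs_of_pos hc0])
    have hA' : A = -|A| := by rw [abs_of_neg hneg]; ring
    nlinarith
  · have hh := h (-c) (by simp [ne_of_gt hc0]) (by rwa [abs_neg, abs_of_pos hc0])
    have hA' : A = |A| := (abs_of_pos hpos).symm
    nlinarith

/-- explicit form of the FLSA solution given the transition times
`1 = t 0 < t 1 < ⋯ < t (M-1) ≤ N` (with the convention `t M = N + 1`) and
transition signs `s k = sgn(m_{t_k} - m_{t_{k-1}})`, `s M = 0` (1-indexed data). -/
theorem stmt4 (N M : ℕ) (hN : 1 ≤ N) (hM : 1 ≤ M)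
    (y m : ℕ → ℝ) (lam : ℝ) (hlam : 0 < lam)
    (hmin : ∀ g : ℕ → ℝ,
      (1 / 2) * ∑ u ∈ Icc 1 N, (y u - m u) ^ 2 + lam * ∑ u ∈ Icc 2 N, |m u - m (u - 1)|
        ≤ (1 / 2) * ∑ u ∈ Icc 1 N, (y u - g u) ^ 2 + lam * ∑ u ∈ Icc 2 N, |g u - g (u - 1)|)
    (t : ℕ → ℕ) (ht0 : t 0 = 1) (htM : t M = N + 1) (htN : t (M - 1) ≤ N)
    (hmono : ∀ k, k < M → t k < t (k + 1))
    (htrans : ∀ j, 2 ≤ j → j ≤ N →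
      (m j ≠ m (j - 1) ↔ ∃ k, 1 ≤ k ∧ k ≤ M - 1 ∧ t k = j))
    (s : ℕ → ℝ)
    (hs : ∀ k, 1 ≤ k → k ≤ M - 1 → s k = Real.sign (m (t k) - m (t (k - 1))))
    (hsM : s M = 0) :
    m 1 = (1 / ((t 1 : ℝ) - 1)) * ∑ j ∈ Icc 1 (t 1 - 1), y j + lam * s 1 / ((t 1 : ℝ) - 1)
    ∧ ∀ k, 1 ≤ k → k ≤ M - 1 →
      m (t k) = (1 / ((t (k + 1) : ℝ) - (t k : ℝ))) * ∑ j ∈ Ico (t k) (t (k + 1)), y j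
        + lam * (s (k + 1) - s k) / ((t (k + 1) : ℝ) - (t k : ℝ)) := by
  -- strict monotonicity of t on [0, M]
  have tmono : ∀ i j, i < j → j ≤ M → t i < t j := by
    intro i j hij hjM
    induction j with
    | zero => omega
    | succ n ih =>
      rcases Nat.lt_or_ge i n with h | h
      · exact lt_trans (ih h (by omega)) (hmono n (by omega))
      · have hin : i = n := by omega
        subst hin; exact hmono i (by omega)
  have tmono' : ∀ i j, i ≤ j → j ≤ M → t i ≤ t j := by
    intro i j hij hjM
    rcases Nat.eq_or_lt_of_le hij with h | h
    · subst h; exact le_rfl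
    · exact le_of_lt (tmono i j h hjM)
  have tpos : ∀ i, i ≤ M → 1 ≤ t i := by
    intro i hi
    have := tmono' 0 i (Nat.zero_le _) hi
    omega
  have htle : ∀ k, k ≤ M - 1 → t k ≤ N := by
    intro k hk
    exact le_trans (tmono' k (M - 1) hk (by omega)) htN
  have ht2 : ∀ k, 1 ≤ k → k ≤ M → 2 ≤ t k := by
    intro k h1 h2
    have := tmono 0 k h1 h2
    omega
  -- m is constant on each segment [t k, t (k+1))
  have hconst : ∀ k, k + 1 ≤ M → ∀ j, t k ≤ j → j < t (k + 1) → m j = m (t k) := by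
    intro k hk j hj
    induction j, hj using Nat.le_induction with
    | base => intro _; rfl
    | succ n hn ih =>
      intro hlt
      have hn' : n < t (k + 1) := by omega
      have h1 : m n = m (t k) := ih hn'
      have h2 : m (n + 1) = m n := by
        by_contra hne
        have h2n : 2 ≤ n + 1 := by have := tpos k (by omega); omega
        have hb : t (k + 1) ≤ N + 1 := by
          have := tmono' (k + 1) M hk le_rfl; omega
        have hNn : n + 1 ≤ N := by omega
        have := (htrans (n + 1) h2n hNn).1 (by simpa using hne)
        obtain ⟨k', hk1', hk2', hk3'⟩ := this
        have c1 : k < k' := by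
          by_contra hcon
          have := tmono' k' k (by omega) (by omega)
          omega
        have c2 : k' < k + 1 := by
          by_contra hcon
          have := tmono' (k + 1) k' (by omega) (by omega)
          omega
        omega
      rw [h2, h1]
  -- the jump at a transition is nonzero
  have hjump : ∀ k, 1 ≤ k → k ≤ M - 1 → m (t k) ≠ m (t k - 1) := by
    intro k h1 h2
    exact (htrans (t k) (ht2 k h1 (by omega)) (htle k h2)).2 ⟨k, h1, h2, rfl⟩
  -- sign of the jump
  have hsign : ∀ k, 1 ≤ k → k ≤ M - 1 → s k = Real.sign (m (t k) - m (t k - 1)) := by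
    intro k h1 h2
    have hkk : k - 1 + 1 = k := by omega
    have hprev : m (t k - 1) = m (t (k - 1)) := by
      have hlt : t (k - 1) < t k := by
        have := tmono (k - 1) k (by omega) (by omega); omega
      have := hconst (k - 1) (by omega) (t k - 1) (by omega) (by rw [hkk]; omega)
      exact this
    rw [hs k h1 h2, hprev]
  -- key identity for each segment
  have key : ∀ k, k ≤ M - 1 →
      ((t (k + 1) : ℝ) - (t k : ℝ)) * m (t k) =
        (∑ j ∈ Ico (t k) (t (k + 1)), y j)
          + lam * (s (k + 1) - (if k = 0 then 0 else s k)) := by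
    intro k hk
    have hkM : k + 1 ≤ M := by omega
    have hab : t k < t (k + 1) := hmono k (by omega)
    have ha1 : 1 ≤ t k := tpos k (by omega)
    have hbN1 : t (k + 1) ≤ N + 1 := by have := tmono' (k + 1) M hkM le_rfl; omega
    have haN : t k ≤ N := htle k hk
    have hL : (0:ℝ) < (t (k + 1) : ℝ) - (t k : ℝ) := by
      have : (t k : ℝ) < (t (k + 1) : ℝ) := by exact_mod_cast hab
      linarith
    have hbcase : (k + 1 ≤ M - 1 ∧ t (k + 1) ≤ N) ∨ (k + 1 = M ∧ t (k + 1) = N + 1) := by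
      rcases Nat.lt_or_ge (k + 1) M with h | h
      · left; exact ⟨by omega, htle (k + 1) (by omega)⟩
      · right
        have he : k + 1 = M := by omega
        exact ⟨he, by rw [he, htM]⟩
    set δ1 : ℝ := if k = 0 then 1 else |m (t k) - m (t k - 1)| with hδ1def
    set δ2 : ℝ := if k + 1 ≤ M - 1 then |m (t (k + 1)) - m (t (k + 1) - 1)| else 1 with hδ2def
    have hδ1 : 0 < δ1 := by
      by_cases h : k = 0
      · simp [hδ1def, h]
      · rw [hδ1def, if_neg h]
        exact abs_pos.2 (sub_ne_zero.2 (hjump k (by omega) hk))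
    have hδ2 : 0 < δ2 := by
      by_cases h : k + 1 ≤ M - 1
      · rw [hδ2def, if_pos h]
        exact abs_pos.2 (sub_ne_zero.2 (hjump (k + 1) (by omega) h))
      · simp [hδ2def, h]
    set δ : ℝ := min δ1 δ2 with hδdef
    have hδ : 0 < δ := lt_min hδ1 hδ2
    set σ : ℝ := if k = 0 then 0 else s k with hσdef
    set S : ℝ := ∑ j ∈ Ico (t k) (t (k + 1)), y j with hSdef
    set A : ℝ := ((t (k + 1) : ℝ) - (t k : ℝ)) * m (t k) - S + lam * (σ - s (k + 1)) with hAdef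
    have main : ∀ e : ℝ, e ≠ 0 → |e| < δ →
        0 ≤ ((t (k + 1) : ℝ) - (t k : ℝ)) / 2 * e ^ 2 + A * e := by
      intro e he0 heδ
      set g : ℕ → ℝ := fun u => if u ∈ Ico (t k) (t (k + 1)) then m u + e else m u with hg
      have hval : ∀ u ∈ Ico (t k) (t (k + 1)), m u = m (t k) := by
        intro u hu; rw [mem_Ico] at hu; exact hconst k hkM u hu.1 hu.2
      have hsub : Ico (t k) (t (k + 1)) ⊆ Icc 1 N := by
        intro u hu; rw [mem_Ico] at hu; rw [mem_Icc]; omega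
      -- quadratic part
      have hq : ∑ u ∈ Icc 1 N, (y u - g u) ^ 2
          = (∑ u ∈ Icc 1 N, (y u - m u) ^ 2)
            + (((t (k + 1) : ℝ) - (t k : ℝ)) * e ^ 2 - 2 * e * S
               + 2 * e * (((t (k + 1) : ℝ) - (t k : ℝ)) * m (t k))) := by
        have hpt : ∀ u ∈ Icc 1 N, (y u - g u) ^ 2
            = (y u - m u) ^ 2
              + (if u ∈ Ico (t k) (t (k + 1)) then e ^ 2 - 2 * e * y u + 2 * e * m (t k) else 0) := by
          intro u hu
          by_cases h : u ∈ Ico (t k) (t (k + 1))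
          · simp only [hg, if_pos h]
            rw [hval u h]; ring
          · simp only [hg, if_neg h]; ring
        rw [Finset.sum_congr rfl hpt, Finset.sum_add_distrib,
            Finset.sum_ite_mem, Finset.inter_eq_right.mpr hsub]
        have hinner : ∑ u ∈ Ico (t k) (t (k + 1)), (e ^ 2 - 2 * e * y u + 2 * e * m (t k))
            = ((t (k + 1) : ℝ) - (t k : ℝ)) * e ^ 2 - 2 * e * S
               + 2 * e * (((t (k + 1) : ℝ) - (t k : ℝ)) * m (t k)) := by
          rw [Finset.sum_add_distrib, Finset.sum_sub_distrib, Finset.sum_const,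
              Finset.sum_const, ← Finset.mul_sum, Nat.card_Ico]
          have hcard : ((t (k + 1) - t k : ℕ) : ℝ) = (t (k + 1) : ℝ) - (t k : ℝ) := by
            rw [Nat.cast_sub (le_of_lt hab)]
          rw [nsmul_eq_mul, nsmul_eq_mul, hcard, hSdef]
          ring
        rw [hinner]
      -- absolute-value part
      have habs : ∑ u ∈ Icc 2 N, |g u - g (u - 1)|
          = (∑ u ∈ Icc 2 N, |m u - m (u - 1)|) + (σ * e - s (k + 1) * e) := by
        have hpt : ∀ u ∈ Icc 2 N, |g u - g (u - 1)|
            = |m u - m (u - 1)|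
              + ((if u = t k then s k * e else 0) + (if u = t (k + 1) then -(s (k + 1)) * e else 0)) := by
          intro u hu
          rw [mem_Icc] at hu
          by_cases hu1 : u = t k
          · subst hu1
            have hk1 : 1 ≤ k := by
              by_contra h
              have hk0 : k = 0 := by omega
              rw [hk0, ht0] at hu
              omega
            have hne : m (t k) - m (t k - 1) ≠ 0 := sub_ne_zero.2 (hjump k hk1 hk)
            have heΔ : |e| < |m (t k) - m (t k - 1)| := by
              have h1 : δ ≤ δ1 := min_le_left _ _
              rw [hδ1def, if_neg (by omega : ¬ k = 0)] at h1
              linarith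
            have hgu : g (t k) = m (t k) + e := by
              simp only [hg]
              rw [if_pos (by rw [mem_Ico]; omega)]
            have hgu1 : g (t k - 1) = m (t k - 1) := by
              simp only [hg]
              rw [if_neg (by rw [mem_Ico]; omega)]
            rw [hgu, hgu1]
            have hre : m (t k) + e - m (t k - 1) = (m (t k) - m (t k - 1)) + e := by ring
            rw [hre, abs_add_small _ e hne heΔ, ← hsign k hk1 hk]
            rw [if_pos rfl, if_neg (by omega : ¬ t k = t (k + 1))]
            ring
          · by_cases hu2 : u = t (k + 1)
            · subst hu2
              have hkk1 : k + 1 ≤ M - 1 := by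
                rcases hbcase with ⟨h1, h2⟩ | ⟨h1, h2⟩
                · exact h1
                · omega
              have hne : m (t (k + 1)) - m (t (k + 1) - 1) ≠ 0 :=
                sub_ne_zero.2 (hjump (k + 1) (by omega) hkk1)
              have heΔ : |e| < |m (t (k + 1)) - m (t (k + 1) - 1)| := by
                have h1 : δ ≤ δ2 := min_le_right _ _
                rw [hδ2def, if_pos hkk1] at h1
                linarith
              have hgu : g (t (k + 1)) = m (t (k + 1)) := by
                simp only [hg]
                rw [if_neg (by rw [mem_Ico]; omega)]
              have hgu1 : g (t (k + 1) - 1) = m (t (k + 1) - 1) + e := by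
                simp only [hg]
                rw [if_pos (by rw [mem_Ico]; omega)]
              rw [hgu, hgu1]
              have hre : m (t (k + 1)) - (m (t (k + 1) - 1) + e)
                  = (m (t (k + 1)) - m (t (k + 1) - 1)) + (-e) := by ring
              have heΔ' : |(-e)| < |m (t (k + 1)) - m (t (k + 1) - 1)| := by rwa [abs_neg]
              rw [hre, abs_add_small _ (-e) hne heΔ', ← hsign (k + 1) (by omega) hkk1]
              rw [if_neg hu1, if_pos rfl]
              ring
            · rw [if_neg hu1, if_neg hu2]
              by_cases h3 : u ∈ Ico (t k) (t (k + 1))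
              · have h4 : u - 1 ∈ Ico (t k) (t (k + 1)) := by
                  rw [mem_Ico] at h3 ⊢; omega
                simp only [hg, if_pos h3, if_pos h4]
                have : m u + e - (m (u - 1) + e) = m u - m (u - 1) := by ring
                rw [this]; ring
              · have h4 : u - 1 ∉ Ico (t k) (t (k + 1)) := by
                  rw [mem_Ico] at h3 ⊢
                  simp only [not_and, not_lt] at h3 ⊢
                  omega
                simp only [hg, if_neg h3, if_neg h4]
                ring
        rw [Finset.sum_congr rfl hpt, Finset.sum_add_distrib, Finset.sum_add_distrib,
            Finset.sum_ite_eq' (Icc 2 N) (t k) (fun _ => s k * e),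
            Finset.sum_ite_eq' (Icc 2 N) (t (k + 1)) (fun _ => -(s (k + 1)) * e)]
        have hc1 : (if t k ∈ Icc 2 N then s k * e else 0) = σ * e := by
          by_cases h : k = 0
          · rw [if_neg, hσdef, if_pos h]
            · ring
            · rw [h, ht0, mem_Icc]; omega
          · rw [if_pos, hσdef, if_neg h]
            rw [mem_Icc]
            exact ⟨ht2 k (by omega) (by omega), htle k hk⟩
        have hc2 : (if t (k + 1) ∈ Icc 2 N then -(s (k + 1)) * e else 0) = -(s (k + 1)) * e := by
          rcases hbcase with ⟨h1, h2⟩ | ⟨h1, h2⟩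
          · rw [if_pos]
            rw [mem_Icc]
            exact ⟨ht2 (k + 1) (by omega) (by omega), h2⟩
          · rw [if_neg (by rw [mem_Icc]; omega), h1, hsM]
            ring
        rw [hc1, hc2]
        ring
      have h0 := hmin g
      rw [hq, habs] at h0
      have h0' : 0 ≤ 1 / 2 * (((t (k + 1) : ℝ) - (t k : ℝ)) * e ^ 2 - 2 * e * S
               + 2 * e * (((t (k + 1) : ℝ) - (t k : ℝ)) * m (t k)))
          + lam * (σ * e - s (k + 1) * e) := by linarith
      have hre : 1 / 2 * (((t (k + 1) : ℝ) - (t k : ℝ)) * e ^ 2 - 2 * e * S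
               + 2 * e * (((t (k + 1) : ℝ) - (t k : ℝ)) * m (t k)))
          + lam * (σ * e - s (k + 1) * e)
          = ((t (k + 1) : ℝ) - (t k : ℝ)) / 2 * e ^ 2 + A * e := by
        rw [hAdef]; ring
      linarith
    have hA0 : A = 0 := nonneg_quad _ A δ hL hδ main
    rw [hAdef] at hA0
    rw [hSdef] at hA0
    linear_combination hA0
  constructor
  · have h0 := key 0 (by omega)
    have ht1 : 2 ≤ t 1 := ht2 1 le_rfl hM
    rw [ht0, if_pos rfl] at h0
    have hL : (0:ℝ) < (t 1 : ℝ) - 1 := by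
      have : (2:ℝ) ≤ (t 1 : ℝ) := by exact_mod_cast ht1
      linarith
    have hIcc : Icc 1 (t 1 - 1) = Ico 1 (t 1) := by
      rw [← Finset.Ico_add_one_right_eq_Icc]
      congr 1
      omega
    rw [hIcc]
    have hcast : ((1:ℕ) : ℝ) = (1:ℝ) := by norm_num
    rw [hcast] at h0
    field_simp
    linarith [h0]
  · intro k h1 h2
    have h0 := key k h2
    rw [if_neg (by omega)] at h0
    have hab : t k < t (k + 1) := hmono k (by omega)
    have hL : (0:ℝ) < (t (k + 1) : ℝ) - (t k : ℝ) := by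
      have : (t k : ℝ) < (t (k + 1) : ℝ) := by exact_mod_cast hab
      linarith
    field_simp
    linarith [h0]
end

section
/- Let x_1,…,x_n be exchangeable real-valued random variables with continuous joint distribution, and define u_k = ∑_{i=1}^k x_i − (k/n)∑_{i=1}^n x_i for k = 1,…,n. Then for each r ∈ {0,1,…,n−1}, the probability that exactly r of the values u_1,…,u_n are positive equals 1/n. -/
open Finset MeasureTheory

namespace SA5

noncomputable def Uv (n : ℕ) (v : Fin n → ℝ) (k : ℕ) : ℝ :=
  (∑ i ∈ univ.filter (fun i : Fin n => (i : ℕ) + 1 ≤ k), v i)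
    - ((k : ℝ) / (n : ℝ)) * ∑ i, v i

noncomputable def Nv (n : ℕ) (v : Fin n → ℝ) : ℕ :=
  ((Icc 1 n).filter (fun k => 0 < Uv n v k)).card

noncomputable def ES (n : ℕ) (hn : 0 < n) (w : Fin n → ℝ) (m : ℕ) : ℝ :=
  ∑ j ∈ Finset.range m, w ⟨j % n, Nat.mod_lt j hn⟩

lemma sum_filter_eq (n : ℕ) (hn : 0 < n) (k : ℕ) (hk : k ≤ n) (f : Fin n → ℝ) :
    ∑ i ∈ univ.filter (fun i : Fin n => (i : ℕ) + 1 ≤ k), f i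
      = ∑ j ∈ Finset.range k, f ⟨j % n, Nat.mod_lt j hn⟩ := by
  refine Finset.sum_nbij' (fun i => (i : ℕ)) (fun j => ⟨j % n, Nat.mod_lt j hn⟩)
    ?_ ?_ ?_ ?_ ?_
  · intro i hi
    simp only [mem_filter, mem_univ, true_and] at hi
    simp only [Finset.mem_range]; omega
  · intro j hj
    simp only [Finset.mem_range] at hj
    simp only [mem_filter, mem_univ, true_and]
    have : j % n = j := Nat.mod_eq_of_lt (lt_of_lt_of_le hj hk)
    omega
  · intro i hi
    simp only [mem_filter, mem_univ, true_and] at hi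
    ext
    simp only []
    exact Nat.mod_eq_of_lt i.isLt
  · intro j hj
    simp only [Finset.mem_range] at hj
    simp only []
    exact Nat.mod_eq_of_lt (lt_of_lt_of_le hj hk)
  · intro i hi
    congr 1
    ext
    simp only []
    exact (Nat.mod_eq_of_lt i.isLt).symm


lemma ES_period (n : ℕ) (hn : 0 < n) (w : Fin n → ℝ) (hw : ∑ i, w i = 0) (m : ℕ) :
    ES n hn w (m + n) = ES n hn w m := by
  haveI : NeZero n := ⟨hn.ne'⟩
  have h1 : ES n hn w (m + n) = ES n hn w m
      + ∑ j ∈ Finset.Ico m (m + n), w ⟨j % n, Nat.mod_lt j hn⟩ := by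
    rw [ES, ES, Finset.range_eq_Ico, Finset.range_eq_Ico]
    exact (Finset.sum_Ico_consecutive (fun j => w ⟨j % n, Nat.mod_lt j hn⟩) (Nat.zero_le m) (Nat.le_add_right m n)).symm
  have h2 : ∑ j ∈ Finset.Ico m (m + n), w ⟨j % n, Nat.mod_lt j hn⟩
      = ∑ j ∈ Finset.range n, w ⟨(m + j) % n, Nat.mod_lt _ hn⟩ := by
    rw [Finset.sum_Ico_eq_sum_range]
    simp only [Nat.add_sub_cancel_left]
  have h3 : ∑ j ∈ Finset.range n, w ⟨(m + j) % n, Nat.mod_lt _ hn⟩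
      = ∑ j : Fin n, w ((⟨m % n, Nat.mod_lt m hn⟩ : Fin n) + j) := by
    rw [← Fin.sum_univ_eq_sum_range (fun j => w ⟨(m + j) % n, Nat.mod_lt _ hn⟩) n]
    refine Finset.sum_congr rfl fun j _ => ?_
    congr 1
    ext
    simp [Fin.add_def, Nat.mod_add_mod]
  have h4 : ∑ j : Fin n, w ((⟨m % n, Nat.mod_lt m hn⟩ : Fin n) + j) = ∑ i, w i :=
    Equiv.sum_comp (Equiv.addLeft (⟨m % n, Nat.mod_lt m hn⟩ : Fin n)) w
  rw [h1, h2, h3, h4, hw, add_zero]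

lemma ES_mod (n : ℕ) (hn : 0 < n) (w : Fin n → ℝ) (hw : ∑ i, w i = 0) (a : ℕ) :
    ES n hn w a = ES n hn w (a % n) := by
  have key : ∀ q r, ES n hn w (r + q * n) = ES n hn w r := by
    intro q
    induction q with
    | zero => simp
    | succ q ih =>
      intro r
      have : r + (q + 1) * n = (r + q * n) + n := by ring
      rw [this, ES_period n hn w hw, ih]
  conv_lhs => rw [← Nat.mod_add_div a n]
  rw [← key (a / n) (a % n)]
  ring_nf


lemma card_filter_le (n : ℕ) (hn : 0 < n) (k : ℕ) (hk : k ≤ n) :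
    (univ.filter (fun i : Fin n => (i : ℕ) + 1 ≤ k)).card = k := by
  have h : (univ.filter (fun i : Fin n => (i : ℕ) + 1 ≤ k)).card
      = (Finset.range k).card := by
    refine Finset.card_nbij' (fun i => (i : ℕ))
      (fun j => ⟨j % n, Nat.mod_lt j hn⟩) ?_ ?_ ?_ ?_
    · intro i hi
      simp only [Finset.mem_coe, mem_filter, mem_univ, true_and] at hi
      simp only [Finset.mem_coe, Finset.mem_range]; omega
    · intro j hj
      simp only [Finset.mem_coe, Finset.mem_range] at hj
      simp only [Finset.mem_coe, mem_filter, mem_univ, true_and]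
      have : j % n = j := Nat.mod_eq_of_lt (lt_of_lt_of_le hj hk)
      omega
    · intro i hi
      ext
      simp only []
      exact Nat.mod_eq_of_lt i.isLt
    · intro j hj
      simp only [Finset.mem_coe, Finset.mem_range] at hj
      simp only []
      exact Nat.mod_eq_of_lt (lt_of_lt_of_le hj hk)
  rw [h, Finset.card_range]

lemma Uv_centered (n : ℕ) (hn : 0 < n) (v : Fin n → ℝ) (k : ℕ) (hk : k ≤ n) :
    Uv n v k = ∑ i ∈ univ.filter (fun i : Fin n => (i : ℕ) + 1 ≤ k),
      (v i - (∑ j, v j) / n) := by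
  rw [Uv, Finset.sum_sub_distrib, Finset.sum_const, card_filter_le n hn k hk, nsmul_eq_mul]
  ring

lemma sum_shift (n : ℕ) [NeZero n] (v : Fin n → ℝ) (c : Fin n) :
    ∑ i, v (i + c) = ∑ i, v i :=
  Equiv.sum_comp (Equiv.addRight c) v

lemma Uv_shift (n : ℕ) (hn : 0 < n) (v : Fin n → ℝ) (c : Fin n) (k : ℕ) (hk : k ≤ n) :
    Uv n (fun i => v (i + c)) k
      = ES n hn (fun i => v i - (∑ j, v j) / n) ((c.val + k) % n)
        - ES n hn (fun i => v i - (∑ j, v j) / n) c.val := by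
  haveI : NeZero n := ⟨hn.ne'⟩
  set w : Fin n → ℝ := fun i => v i - (∑ j, v j) / n with hwdef
  have hn' : (n : ℝ) ≠ 0 := Nat.cast_ne_zero.mpr hn.ne'
  have hw : ∑ i, w i = 0 := by
    simp only [hwdef, Finset.sum_sub_distrib, Finset.sum_const, Finset.card_univ,
      Fintype.card_fin, nsmul_eq_mul]
    field_simp
    ring
  have h1 : Uv n (fun i => v (i + c)) k
      = ∑ j ∈ Finset.range k, w (⟨j % n, Nat.mod_lt j hn⟩ + c) := by
    rw [Uv_centered n hn _ k hk]
    rw [sum_shift n v c]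
    exact sum_filter_eq n hn k hk (fun i => w (i + c))
  have h2 : ES n hn w (c.val + k) = ES n hn w c.val
      + ∑ j ∈ Finset.range k, w ⟨(c.val + j) % n, Nat.mod_lt _ hn⟩ := by
    rw [ES, ES, Finset.range_eq_Ico, Finset.range_eq_Ico]
    rw [← Finset.sum_Ico_consecutive (fun j => w ⟨j % n, Nat.mod_lt j hn⟩)
      (Nat.zero_le c.val) (Nat.le_add_right c.val k)]
    congr 1
    rw [Finset.sum_Ico_eq_sum_range]
    simp only [Nat.add_sub_cancel_left, Finset.range_eq_Ico]
  rw [← ES_mod n hn w hw, h1, h2]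
  rw [add_sub_cancel_left]
  refine Finset.sum_congr rfl fun j _ => ?_
  congr 1
  ext
  simp [Fin.add_def, Nat.mod_add_mod, Nat.add_comm]


lemma modarith1 (n c b : ℕ) (hn : 0 < n) (hc : c < n) (hb : b < n) :
    (c + ((b + n - c - 1) % n + 1)) % n = b := by
  have h1 : c + ((b + n - c - 1) % n + 1) = (c + 1) + (b + n - c - 1) % n := by omega
  rw [h1, Nat.add_mod_mod]
  have h2 : (c + 1) + (b + n - c - 1) = b + n := by omega
  rw [h2, Nat.add_mod_right, Nat.mod_eq_of_lt hb]

lemma modarith2 (n c k : ℕ) (hn : 0 < n) (hc : c < n) (hk1 : 1 ≤ k) (hk2 : k ≤ n) :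
    ((c + k) % n + n - c - 1) % n + 1 = k := by
  rcases lt_or_ge (c + k) n with h | h
  · rw [Nat.mod_eq_of_lt h]
    have h3 : c + k + n - c - 1 = (k - 1) + n := by omega
    rw [h3, Nat.add_mod_right, Nat.mod_eq_of_lt (by omega)]
    omega
  · have hm : (c + k) % n = c + k - n := by
      rw [Nat.mod_eq_sub_mod h, Nat.mod_eq_of_lt (by omega)]
    rw [hm]
    have h3 : c + k - n + n - c - 1 = k - 1 := by omega
    rw [h3, Nat.mod_eq_of_lt (by omega)]
    omega

lemma rank_lt (n : ℕ) (a : Fin n → ℝ) (c c' : Fin n) (hlt : a c < a c') :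
    (univ.filter (fun j : Fin n => a c' < a j)).card
      < (univ.filter (fun j : Fin n => a c < a j)).card := by
  refine Finset.card_lt_card ?_
  have hsub : univ.filter (fun j : Fin n => a c' < a j)
      ⊆ univ.filter (fun j : Fin n => a c < a j) := by
    intro j hj
    simp only [mem_filter, mem_univ, true_and] at hj ⊢
    exact hlt.trans hj
  refine (Finset.ssubset_iff_of_subset hsub).mpr ⟨c', ?_, ?_⟩
  · simp [hlt]
  · simp

lemma rank_injective (n : ℕ) (a : Fin n → ℝ) (ha : Function.Injective a) :
    Function.Injective
      (fun c => (univ.filter (fun j : Fin n => a c < a j)).card) := by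
  intro c c' h
  simp only [] at h
  by_contra hne
  rcases (ha.ne hne).lt_or_gt with hlt | hlt
  · exact absurd h (rank_lt n a c c' hlt).ne'
  · exact absurd h.symm (rank_lt n a c' c hlt).ne'

lemma rank_exists_unique (n : ℕ) (hn : 0 < n) (a : Fin n → ℝ)
    (ha : Function.Injective a) (r : ℕ) (hr : r ≤ n - 1) :
    ∃! c : Fin n, (univ.filter (fun j : Fin n => a c < a j)).card = r := by
  have hlt : ∀ c : Fin n, (univ.filter (fun j : Fin n => a c < a j)).card < n := by
    intro c
    have hsub : univ.filter (fun j : Fin n => a c < a j) ⊆ univ.erase c := by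
      intro j hj
      simp only [mem_filter, mem_univ, true_and] at hj
      simp only [mem_erase, mem_univ, and_true]
      rintro rfl
      exact lt_irrefl _ hj
    calc (univ.filter (fun j : Fin n => a c < a j)).card
        ≤ (univ.erase c).card := Finset.card_le_card hsub
      _ = n - 1 := by rw [Finset.card_erase_of_mem (mem_univ c), Finset.card_univ,
            Fintype.card_fin]
      _ < n := by omega
  set R : Fin n → Fin n := fun c => ⟨_, hlt c⟩ with hR
  have hRi : Function.Injective R := by
    intro c c' h
    exact rank_injective n a ha (congrArg Fin.val h)
  have hRs : Function.Surjective R := Finite.surjective_of_injective hRi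
  obtain ⟨c, hc⟩ := hRs ⟨r, by omega⟩
  refine ⟨c, congrArg Fin.val hc, fun c' hc' => hRi (Fin.ext ?_)⟩
  exact hc'.trans (congrArg Fin.val hc).symm

lemma Nv_shift (n : ℕ) (hn : 0 < n) (v : Fin n → ℝ) (c : Fin n) :
    Nv n (fun i => v (i + c))
      = (univ.filter (fun j : Fin n =>
          ES n hn (fun i => v i - (∑ x, v x) / n) c.val
            < ES n hn (fun i => v i - (∑ x, v x) / n) j.val)).card := by
  have key : ∀ k, 1 ≤ k → k ≤ n →
      (0 < Uv n (fun i => v (i + c)) k ↔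
        ES n hn (fun i => v i - (∑ x, v x) / n) c.val
          < ES n hn (fun i => v i - (∑ x, v x) / n) ((c.val + k) % n)) := by
    intro k hk1 hk2
    rw [Uv_shift n hn v c k hk2]
    exact sub_pos
  rw [Nv]
  refine Finset.card_bij' (fun k hk => (⟨(c.val + k) % n, Nat.mod_lt _ hn⟩ : Fin n))
    (fun b hb => (b.val + n - c.val - 1) % n + 1) ?_ ?_ ?_ ?_
  · intro k hk
    simp only [mem_filter, Finset.mem_Icc] at hk
    simp only [mem_filter, mem_univ, true_and]
    exact (key k hk.1.1 hk.1.2).mp hk.2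
  · intro b hb
    simp only [mem_filter, mem_univ, true_and] at hb
    simp only [mem_filter, Finset.mem_Icc]
    have hk1 : 1 ≤ (b.val + n - c.val - 1) % n + 1 := by omega
    have hk2 : (b.val + n - c.val - 1) % n + 1 ≤ n := by
      have := Nat.mod_lt (b.val + n - c.val - 1) hn
      omega
    refine ⟨⟨hk1, hk2⟩, ?_⟩
    rw [key _ hk1 hk2, modarith1 n c.val b.val hn c.isLt b.isLt]
    exact hb
  · intro k hk
    simp only [mem_filter, Finset.mem_Icc] at hk
    exact modarith2 n c.val k hn c.isLt hk.1.1 hk.1.2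
  · intro b hb
    ext
    exact modarith1 n c.val b.val hn c.isLt b.isLt

lemma good_exists_unique (n : ℕ) (hn : 0 < n) (v : Fin n → ℝ)
    (hv : ∀ c : Fin n, ∀ k, 1 ≤ k → k ≤ n - 1 → Uv n (fun i => v (i + c)) k ≠ 0)
    (r : ℕ) (hr : r ≤ n - 1) :
    ∃! c : Fin n, Nv n (fun i => v (i + c)) = r := by
  have ha : Function.Injective
      (fun j : Fin n => ES n hn (fun i => v i - (∑ x, v x) / n) j.val) := by
    intro j c hjc
    simp only [] at hjc
    by_contra hne
    obtain ⟨k, hk1, hk2, hk3⟩ : ∃ k, 1 ≤ k ∧ k ≤ n - 1 ∧ (c.val + k) % n = j.val := by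
      rcases lt_or_ge c.val j.val with h | h
      · refine ⟨j.val - c.val, by omega, by have := j.isLt; omega, ?_⟩
        rw [Nat.mod_eq_of_lt (by have := j.isLt; omega)]
        omega
      · have hlt : j.val < c.val := by
          rcases lt_or_eq_of_le h with h' | h'
          · exact h'
          · exact absurd (Fin.ext h') hne
        refine ⟨j.val + n - c.val, by have := c.isLt; omega,
          by have := c.isLt; omega, ?_⟩
        have h4 : c.val + (j.val + n - c.val) = j.val + n := by have := c.isLt; omega
        rw [h4, Nat.add_mod_right, Nat.mod_eq_of_lt j.isLt]
    have h5 := hv c k hk1 hk2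
    rw [Uv_shift n hn v c k (by omega)] at h5
    rw [hk3] at h5
    exact h5 (by rw [hjc, sub_self])
  have heq : ∀ c : Fin n, Nv n (fun i => v (i + c))
      = (univ.filter (fun j : Fin n =>
          ES n hn (fun i => v i - (∑ x, v x) / n) c.val
            < ES n hn (fun i => v i - (∑ x, v x) / n) j.val)).card :=
    Nv_shift n hn v
  simpa only [heq] using rank_exists_unique n hn _ ha r hr


lemma Uv_measurable (n k : ℕ) : Measurable (fun v : Fin n → ℝ => Uv n v k) := by
  unfold Uv
  refine Measurable.fun_sub ?_ ?_
  · exact Finset.measurable_sum _ fun i _ => measurable_pi_apply i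
  · exact (Finset.measurable_sum _ fun i _ => measurable_pi_apply i).const_mul _

lemma Nv_measurable (n : ℕ) : Measurable (Nv n) := by
  have h : Nv n = fun v => ∑ k ∈ Icc 1 n, if 0 < Uv n v k then 1 else 0 := by
    funext v
    rw [Nv, Finset.card_filter]
  rw [h]
  exact Finset.measurable_sum _ fun k _ =>
    Measurable.ite (measurableSet_lt measurable_const (Uv_measurable n k))
      measurable_const measurable_const

end SA5

/-- Sparre Andersen combinatorial lemma from fluctuation theory:
for exchangeable continuous random variables `x 1, …, x n` and
`u k = ∑_{i=1}^k x i − (k/n) ∑_{i=1}^n x i`, the probability that exactly `r` of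
`u 1, …, u n` are positive equals `1/n`, for each `r ∈ {0, …, n−1}`. -/
theorem stmt5 {Ω : Type*} [MeasurableSpace Ω] (μ : Measure Ω) [IsProbabilityMeasure μ]
    (n : ℕ) (hn : 1 ≤ n) (x : Fin n → Ω → ℝ) (hmeas : ∀ i, Measurable (x i))
    (hexch : ∀ σ : Equiv.Perm (Fin n),
      Measure.map (fun ω (i : Fin n) => x (σ i) ω) μ
        = Measure.map (fun ω (i : Fin n) => x i ω) μ)
    (u : ℕ → Ω → ℝ)
    (hu : ∀ k ω, u k ω =
      (∑ i ∈ univ.filter (fun i : Fin n => (i : ℕ) + 1 ≤ k), x i ω)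
        - ((k : ℝ) / (n : ℝ)) * ∑ i, x i ω)
    (hcont : ∀ k, 1 ≤ k → k ≤ n - 1 → μ {ω | u k ω = 0} = 0) :
    ∀ r, r ≤ n - 1 →
      μ {ω | ((Icc 1 n).filter (fun k => 0 < u k ω)).card = r} = 1 / (n : ENNReal) := by

  intro r hr
  haveI : NeZero n := ⟨by omega⟩
  have hn0 : 0 < n := hn
  classical
  set X : Ω → (Fin n → ℝ) := fun ω i => x i ω with hX
  have hXm : Measurable X := measurable_pi_lambda _ hmeas
  have hYm : ∀ c : Fin n, Measurable (fun ω (i : Fin n) => x (i + c) ω) := fun c =>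
    measurable_pi_lambda _ fun i => hmeas _
  have hmap : ∀ c : Fin n,
      Measure.map (fun ω (i : Fin n) => x (i + c) ω) μ = Measure.map X μ := by
    intro c
    have h := hexch (Equiv.addRight c)
    simpa [Equiv.coe_addRight] using h
  have hAm : MeasurableSet {v : Fin n → ℝ | SA5.Nv n v = r} :=
    SA5.Nv_measurable n (measurableSet_singleton r)
  have hUm : ∀ k, MeasurableSet {v : Fin n → ℝ | SA5.Uv n v k = 0} := fun k =>
    SA5.Uv_measurable n k (measurableSet_singleton 0)
  set E : Fin n → Set Ω :=
    fun c => (fun ω (i : Fin n) => x (i + c) ω) ⁻¹' {v | SA5.Nv n v = r} with hE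
  have hEm : ∀ c, MeasurableSet (E c) := fun c => (hYm c) hAm
  have hEμ : ∀ c, μ (E c) = μ (X ⁻¹' {v | SA5.Nv n v = r}) := by
    intro c
    rw [hE]
    rw [← Measure.map_apply (hYm c) hAm, hmap c, Measure.map_apply hXm hAm]
  set Z : Set Ω := ⋃ (c : Fin n) (k : ℕ) (_ : 1 ≤ k ∧ k ≤ n - 1),
      (fun ω (i : Fin n) => x (i + c) ω) ⁻¹' {v | SA5.Uv n v k = 0} with hZdef
  have hZm : MeasurableSet Z :=
    MeasurableSet.iUnion fun c => MeasurableSet.iUnion fun k =>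
      MeasurableSet.iUnion fun _ => (hYm c) (hUm k)
  have hZ0 : μ Z = 0 := by
    refine measure_iUnion_null fun c => measure_iUnion_null fun k =>
      measure_iUnion_null fun hk => ?_
    rw [← Measure.map_apply (hYm c) (hUm k), hmap c, Measure.map_apply hXm (hUm k)]
    have hset : X ⁻¹' {v | SA5.Uv n v k = 0} = {ω | u k ω = 0} := by
      ext ω
      simp only [Set.mem_preimage, Set.mem_setOf_eq, SA5.Uv, hX, hu k ω]
    rw [hset]
    exact hcont k hk.1 hk.2
  have hgood : ∀ ω ∉ Z, ∃! c : Fin n, SA5.Nv n (fun i => X ω (i + c)) = r := by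
    intro ω hω
    refine SA5.good_exists_unique n hn0 (X ω) ?_ r hr
    intro c k hk1 hk2 h0
    exact hω (Set.mem_iUnion.mpr ⟨c, Set.mem_iUnion.mpr ⟨k,
      Set.mem_iUnion.mpr ⟨⟨hk1, hk2⟩, h0⟩⟩⟩)
  have hdisj : Pairwise (Function.onFun Disjoint fun c => E c ∩ Zᶜ) := by
    intro c c' hne
    refine Set.disjoint_left.mpr fun ω h1 h2 => ?_
    obtain ⟨c₀, -, hun⟩ := hgood ω h1.2
    exact hne ((hun c h1.1).trans (hun c' h2.1).symm)
  have hcover : (⋃ c : Fin n, E c ∩ Zᶜ) = Zᶜ := by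
    apply Set.Subset.antisymm
    · exact Set.iUnion_subset fun c => Set.inter_subset_right
    · intro ω hω
      obtain ⟨c, hc, -⟩ := hgood ω hω
      exact Set.mem_iUnion.mpr ⟨c, ⟨hc, hω⟩⟩
  have hsum := measure_iUnion (μ := μ) hdisj fun c => (hEm c).inter hZm.compl
  rw [hcover, tsum_fintype] at hsum
  have hEc : ∀ c, μ (E c ∩ Zᶜ) = μ (E c) := by
    intro c
    refine le_antisymm (measure_mono Set.inter_subset_left) ?_
    calc μ (E c) ≤ μ ((E c ∩ Zᶜ) ∪ Z) := measure_mono (fun ω h => by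
          by_cases hz : ω ∈ Z
          · exact Or.inr hz
          · exact Or.inl ⟨h, hz⟩)
      _ ≤ μ (E c ∩ Zᶜ) + μ Z := measure_union_le _ _
      _ = μ (E c ∩ Zᶜ) := by rw [hZ0, add_zero]
  have hcompl : μ Zᶜ = 1 := by
    rw [measure_compl hZm (measure_ne_top μ Z), hZ0, measure_univ, tsub_zero]
  have hkey : (n : ENNReal) * μ (X ⁻¹' {v | SA5.Nv n v = r}) = 1 := by
    have h1 : ∑ c : Fin n, μ (E c ∩ Zᶜ)
        = (n : ENNReal) * μ (X ⁻¹' {v | SA5.Nv n v = r}) := by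
      rw [Finset.sum_congr rfl fun c _ => (hEc c).trans (hEμ c), Finset.sum_const,
        Finset.card_univ, Fintype.card_fin, nsmul_eq_mul]
    rw [← h1, ← hsum, hcompl]
  have htarget : {ω | ((Icc 1 n).filter (fun k => 0 < u k ω)).card = r}
      = X ⁻¹' {v | SA5.Nv n v = r} := by
    ext ω
    simp only [Set.mem_setOf_eq, Set.mem_preimage, SA5.Nv, SA5.Uv, hX, ← hu]
  rw [htarget]
  have hne0 : (n : ENNReal) ≠ 0 := by
    simp [hn0.ne']
  exact (ENNReal.eq_div_iff hne0 (ENNReal.natCast_ne_top n)).mpr hkey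
end

section
/- Let b ∈ (0,1) and let Φ denote the standard normal cumulative distribution function. Then ∫_0^∞ x² exp(−x²/(2b)) Φ(x/√(b⁻¹−b)) dx = (b^{3/2}/√(2π)) [π − arctan(√(1−b²)/b) + b√(1−b²)]. -/
open Real MeasureTheory Set Filter

section Aux

lemma gauss_Iic_zero : ∫ t in Set.Iic (0:ℝ), Real.exp (-t^2/2) = Real.sqrt (2*π) / 2 := by
  have h : ∀ t : ℝ, Real.exp (-t^2/2) = Real.exp (-(2⁻¹ : ℝ)*t^2) := by intro t; ring_nf
  simp_rw [h]
  have hIoi := integral_gaussian_Ioi (2⁻¹ : ℝ)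
  have htot := integral_gaussian (2⁻¹ : ℝ)
  have hint : Integrable (fun t : ℝ => Real.exp (-(2⁻¹:ℝ)*t^2)) := integrable_exp_neg_mul_sq (by norm_num)
  have hsplit := intervalIntegral.integral_Iic_add_Ioi (b := (0:ℝ)) hint.integrableOn hint.integrableOn
  have : π / 2⁻¹ = 2*π := by ring
  rw [this] at hIoi htot
  linarith [hsplit, hIoi, htot]

lemma tendsto_aux (a : ℝ) (ha : 0 < a) (s : ℝ) :
    Tendsto (fun x : ℝ => |x| ^ s * Real.exp (-a * x ^ 2)) atTop (nhds 0) := by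
  have := tendsto_rpow_abs_mul_exp_neg_mul_sq_cocompact ha s
  refine this.mono_left ?_
  rw [cocompact_eq_atBot_atTop]
  exact le_sup_right

lemma pow_int_on (a : ℝ) (ha : 0 < a) (n : ℕ) :
    IntegrableOn (fun x : ℝ => x ^ n * Real.exp (-a * x ^ 2)) (Ioi 0) := by
  have := integrableOn_rpow_mul_exp_neg_mul_sq ha (s := n)
    (by exact lt_of_lt_of_le (by norm_num) (Nat.cast_nonneg n))
  apply this.congr_fun ?_ measurableSet_Ioi
  intro x hx
  simp [Real.rpow_natCast]

lemma moment2 (a : ℝ) (ha : 0 < a) :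
    ∫ x in Ioi (0:ℝ), x ^ 2 * Real.exp (-a * x ^ 2) = Real.sqrt (π / a) / (4 * a) := by
  have hd : ∀ x ∈ Ici (0:ℝ), HasDerivAt (fun x : ℝ => -x * Real.exp (-a*x^2) / (2*a))
      (x ^ 2 * Real.exp (-a * x ^ 2) - Real.exp (-a*x^2) / (2*a)) x := by
    intro x _
    have h1 : HasDerivAt (fun x : ℝ => -a*x^2) (-a*(2*x)) x := by
      simpa using ((hasDerivAt_pow 2 x).const_mul (-a))
    have h2 : HasDerivAt (fun x : ℝ => Real.exp (-a*x^2)) (Real.exp (-a*x^2) * (-a*(2*x))) x :=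
      h1.exp
    have h3 : HasDerivAt (fun x : ℝ => -x * Real.exp (-a*x^2) / (2*a))
        ((-1 * Real.exp (-a*x^2) + (-x) * (Real.exp (-a*x^2) * (-a*(2*x)))) / (2*a)) x :=
      ((hasDerivAt_id x).neg.mul h2).div_const (2*a)
    convert h3 using 1
    field_simp
    ring
  have hint1 : IntegrableOn (fun x : ℝ => x ^ 2 * Real.exp (-a * x ^ 2)) (Ioi 0) := pow_int_on a ha 2
  have hint2 : IntegrableOn (fun x : ℝ => Real.exp (-a*x^2) / (2*a)) (Ioi 0) :=
    ((integrable_exp_neg_mul_sq ha).div_const _).integrableOn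
  have hint : IntegrableOn (fun x : ℝ => x ^ 2 * Real.exp (-a * x ^ 2) - Real.exp (-a*x^2) / (2*a)) (Ioi 0) :=
    hint1.sub hint2
  have hten : Tendsto (fun x : ℝ => -x * Real.exp (-a*x^2) / (2*a)) atTop (nhds 0) := by
    have h := ((tendsto_aux a ha 1).div_const (2*a)).neg
    rw [zero_div, neg_zero] at h
    refine Tendsto.congr' ?_ h
    filter_upwards [eventually_gt_atTop (0:ℝ)] with x hx
    rw [abs_of_pos hx, Real.rpow_one]; ring
  have key := MeasureTheory.integral_Ioi_of_hasDerivAt_of_tendsto' hd hint hten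
  rw [MeasureTheory.integral_sub hint1 hint2] at key
  have hIoi : ∫ x in Ioi (0:ℝ), Real.exp (-a*x^2) / (2*a) = (Real.sqrt (π/a)/2) / (2*a) := by
    rw [MeasureTheory.integral_div, integral_gaussian_Ioi]
  rw [hIoi] at key
  simp only [neg_zero, zero_mul, mul_zero, ne_eq, OfNat.ofNat_ne_zero, not_false_eq_true,
    zero_pow, zero_div, sub_zero] at key
  have h2 : ∫ x in Ioi (0:ℝ), x ^ 2 * Real.exp (-a * x ^ 2) = Real.sqrt (π/a)/2/(2*a) := by
    linarith
  rw [h2, div_div]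
  congr 1; ring

lemma moment3 (a : ℝ) (ha : 0 < a) :
    ∫ x in Ioi (0:ℝ), x ^ 3 * Real.exp (-a * x ^ 2) = 1 / (2*a^2) := by
  have hd : ∀ x ∈ Ici (0:ℝ), HasDerivAt (fun x : ℝ => -(x^2/(2*a) + 1/(2*a^2)) * Real.exp (-a*x^2))
      (x ^ 3 * Real.exp (-a * x ^ 2)) x := by
    intro x _
    have h1 : HasDerivAt (fun x : ℝ => -a*x^2) (-a*(2*x)) x := by
      simpa using ((hasDerivAt_pow 2 x).const_mul (-a))
    have h2 : HasDerivAt (fun x : ℝ => Real.exp (-a*x^2)) (Real.exp (-a*x^2) * (-a*(2*x))) x :=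
      h1.exp
    have h4 : HasDerivAt (fun x : ℝ => -(x^2/(2*a) + 1/(2*a^2))) (-(2*x/(2*a))) x := by
      have h := (((hasDerivAt_pow 2 x).div_const (2*a)).add_const (1/(2*a^2))).neg
      refine h.congr_deriv ?_
      norm_num
    have h3 := h4.mul h2
    refine h3.congr_deriv ?_
    field_simp
    ring
  have hint : IntegrableOn (fun x : ℝ => x ^ 3 * Real.exp (-a * x ^ 2)) (Ioi 0) := pow_int_on a ha 3
  have hten : Tendsto (fun x : ℝ => -(x^2/(2*a) + 1/(2*a^2)) * Real.exp (-a*x^2)) atTop (nhds 0) := by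
    have h1 := ((tendsto_aux a ha 2).div_const (2*a)).neg
    have h2 := ((tendsto_aux a ha 0).div_const (2*a^2)).neg
    have h := h1.add h2
    simp only [zero_div, neg_zero, add_zero] at h
    refine Tendsto.congr' ?_ h
    filter_upwards [eventually_gt_atTop (0:ℝ)] with x hx
    rw [abs_of_pos hx]
    rw [show (2:ℝ) = ((2:ℕ):ℝ) by norm_num, Real.rpow_natCast, Real.rpow_zero]
    ring
  have key := MeasureTheory.integral_Ioi_of_hasDerivAt_of_tendsto' hd hint hten
  rw [key]
  norm_num

lemma Fint (b : ℝ) (hb : 0 < b) (c : ℝ) :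
    ∫ s in (0:ℝ)..c, 2/(b⁻¹+s^2)^2
      = b*c/(b⁻¹+c^2) + b*Real.sqrt b*Real.arctan (c*Real.sqrt b) := by
  have hpos : ∀ s : ℝ, 0 < b⁻¹ + s^2 := fun s => by positivity
  have hd : ∀ s ∈ uIcc (0:ℝ) c,
      HasDerivAt (fun s : ℝ => b*s/(b⁻¹+s^2) + b*Real.sqrt b*Real.arctan (s*Real.sqrt b))
        (2/(b⁻¹+s^2)^2) s := by
    intro s _
    have h1 : HasDerivAt (fun s : ℝ => b*s) b s := by
      simpa using (hasDerivAt_id s).const_mul b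
    have hden : HasDerivAt (fun s : ℝ => b⁻¹+s^2) (2*s) s := by
      simpa using ((hasDerivAt_pow 2 s).const_add b⁻¹)
    have hq := h1.div hden (hpos s).ne'
    have hin : HasDerivAt (fun s : ℝ => s*Real.sqrt b) (Real.sqrt b) s := by
      simpa using (hasDerivAt_id s).mul_const (Real.sqrt b)
    have harc := ((Real.hasDerivAt_arctan (s*Real.sqrt b)).comp s hin).const_mul (b*Real.sqrt b)
    have hsum := hq.add harc
    refine hsum.congr_deriv ?_
    have hsq : Real.sqrt b * Real.sqrt b = b := Real.mul_self_sqrt hb.le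
    have h1b : 1 + (s*Real.sqrt b)^2 = b*(b⁻¹+s^2) := by
      have h2 : (s*Real.sqrt b)^2 = s^2*b := by rw [mul_pow, Real.sq_sqrt hb.le]
      rw [h2]; field_simp
    rw [h1b]
    field_simp
    ring_nf
    rw [Real.sq_sqrt hb.le]
    ring
  have hcont : IntervalIntegrable (fun s : ℝ => 2/(b⁻¹+s^2)^2) volume 0 c := by
    apply Continuous.intervalIntegrable
    exact continuous_const.div (by fun_prop) (fun s => by positivity)
  have := intervalIntegral.integral_eq_sub_of_hasDerivAt hd hcont
  rw [this]
  simp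

end Aux



/-- for `b ∈ (0,1)`,
`∫_0^∞ x² e^{−x²/(2b)} Φ(x/√(b⁻¹−b)) dx
  = (b^{3/2}/√(2π)) [π − arctan(√(1−b²)/b) + b√(1−b²)]`,
where `Φ` is the standard normal CDF (here `b^{3/2} = b·√b`). -/
theorem stmt7 (b : ℝ) (hb : b ∈ Set.Ioo (0 : ℝ) 1) :
    (∫ x in Set.Ioi (0 : ℝ), x ^ 2 * Real.exp (-x ^ 2 / (2 * b)) *
        ((Real.sqrt (2 * π))⁻¹ *
          ∫ t in Set.Iic (x / Real.sqrt (b⁻¹ - b)), Real.exp (-t ^ 2 / 2)))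
      = (b * Real.sqrt b) / Real.sqrt (2 * π) *
        (π - Real.arctan (Real.sqrt (1 - b ^ 2) / b) + b * Real.sqrt (1 - b ^ 2)) := by
  obtain ⟨hb0, hb1⟩ := hb
  have hbsq : (0:ℝ) < 1 - b^2 := by nlinarith
  have hbb : (0:ℝ) < b⁻¹ - b := by
    have h : b⁻¹ - b = (1-b^2)/b := by field_simp
    rw [h]; positivity
  have h2b : (0:ℝ) < (2*b)⁻¹ := by positivity
  set σ : ℝ := Real.sqrt (b⁻¹ - b) with hσdef
  have hσ : 0 < σ := Real.sqrt_pos.mpr hbb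
  set c : ℝ := σ⁻¹ with hcdef
  have hc : 0 < c := inv_pos.mpr hσ
  have h2π : (0:ℝ) < Real.sqrt (2*π) := Real.sqrt_pos.mpr (by positivity)
  have hgint : Integrable (fun t : ℝ => Real.exp (-t^2/2)) := by
    have h : ∀ t : ℝ, Real.exp (-t^2/2) = Real.exp (-(2⁻¹ : ℝ)*t^2) := by intro t; ring_nf
    simp_rw [h]; exact integrable_exp_neg_mul_sq (by norm_num)
  -- step 1: pointwise rewriting of the integrand
  have hpt : ∀ x ∈ Ioi (0:ℝ),
      x ^ 2 * Real.exp (-x ^ 2 / (2 * b)) *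
        ((Real.sqrt (2 * π))⁻¹ * ∫ t in Iic (x / σ), Real.exp (-t ^ 2 / 2))
      = x^2 * Real.exp (-(2*b)⁻¹ * x^2) / 2
        + (Real.sqrt (2*π))⁻¹ *
          (x^3 * Real.exp (-(2*b)⁻¹*x^2) * ∫ s in (0:ℝ)..c, Real.exp (-(x*s)^2/2)) := by
    intro x hx
    have hx0 : (0:ℝ) < x := hx
    have hIic : ∫ t in Iic (x/σ), Real.exp (-t^2/2)
        = Real.sqrt (2*π)/2 + ∫ t in (0:ℝ)..(x/σ), Real.exp (-t^2/2) := by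
      have h := intervalIntegral.integral_Iic_sub_Iic (a := (0:ℝ)) (b := x/σ)
        hgint.integrableOn hgint.integrableOn
      rw [gauss_Iic_zero] at h
      linarith
    have hsub : ∫ t in (0:ℝ)..(x/σ), Real.exp (-t^2/2)
        = x * ∫ s in (0:ℝ)..c, Real.exp (-(x*s)^2/2) := by
      have h := intervalIntegral.integral_comp_mul_left (f := fun t => Real.exp (-t^2/2))
        (a := (0:ℝ)) (b := c) hx0.ne'
      rw [h, smul_eq_mul, mul_zero, show x * c = x / σ by rw [hcdef, div_eq_mul_inv],
        ← mul_assoc, mul_inv_cancel₀ hx0.ne', one_mul]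
    have hexp : Real.exp (-x ^ 2 / (2 * b)) = Real.exp (-(2*b)⁻¹ * x^2) := by ring_nf
    rw [hIic, hsub, hexp]
    field_simp
  rw [MeasureTheory.setIntegral_congr_fun measurableSet_Ioi hpt]
  -- integrability of the two pieces
  have hint1 : Integrable (fun x : ℝ => x^2 * Real.exp (-(2*b)⁻¹ * x^2) / 2)
      (volume.restrict (Ioi 0)) := (pow_int_on (2*b)⁻¹ h2b 2).div_const 2
  have hJcont : Continuous (fun x : ℝ => ∫ s in (0:ℝ)..c, Real.exp (-(x*s)^2/2)) := by
    apply intervalIntegral.continuous_parametric_intervalIntegral_of_continuous' (μ := volume)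
      (f := fun x s => Real.exp (-(x*s)^2/2)) ?_ 0 c
    fun_prop
  have hJle : ∀ x : ℝ, |∫ s in (0:ℝ)..c, Real.exp (-(x*s)^2/2)| ≤ c := by
    intro x
    have h := intervalIntegral.norm_integral_le_of_norm_le_const (C := 1)
      (f := fun s : ℝ => Real.exp (-(x*s)^2/2)) (a := 0) (b := c) ?_
    · simpa [abs_of_pos hc] using h
    · intro s _
      rw [Real.norm_eq_abs, abs_of_pos (Real.exp_pos _)]
      exact Real.exp_le_one_iff.mpr (by nlinarith [sq_nonneg (x*s)])
  have hJnn : ∀ x : ℝ, 0 ≤ ∫ s in (0:ℝ)..c, Real.exp (-(x*s)^2/2) := by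
    intro x
    apply intervalIntegral.integral_nonneg hc.le
    intro s _; positivity
  have hint2' : Integrable (fun x : ℝ =>
      x^3 * Real.exp (-(2*b)⁻¹*x^2) * ∫ s in (0:ℝ)..c, Real.exp (-(x*s)^2/2))
      (volume.restrict (Ioi 0)) := by
    apply Integrable.mono' ((pow_int_on (2*b)⁻¹ h2b 3).mul_const c)
    · exact (((continuous_pow 3).mul (by fun_prop)).mul hJcont).aestronglyMeasurable
    · filter_upwards [ae_restrict_mem measurableSet_Ioi] with x hx
      have hx0 : (0:ℝ) < x := hx
      rw [Real.norm_eq_abs, abs_mul]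
      have h1 : |x^3 * Real.exp (-(2*b)⁻¹*x^2)| = x^3 * Real.exp (-(2*b)⁻¹*x^2) := by
        rw [abs_of_pos (by positivity)]
      rw [h1]
      exact mul_le_mul_of_nonneg_left (hJle x) (by positivity)
  have hint2 : Integrable (fun x : ℝ => (Real.sqrt (2*π))⁻¹ *
      (x^3 * Real.exp (-(2*b)⁻¹*x^2) * ∫ s in (0:ℝ)..c, Real.exp (-(x*s)^2/2)))
      (volume.restrict (Ioi 0)) := hint2'.const_mul _
  rw [MeasureTheory.integral_add hint1 hint2, MeasureTheory.integral_div,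
    MeasureTheory.integral_const_mul, moment2 (2*b)⁻¹ h2b]
  -- Fubini for the second piece
  have hA : (∫ x in Ioi (0:ℝ),
      x^3 * Real.exp (-(2*b)⁻¹*x^2) * ∫ s in (0:ℝ)..c, Real.exp (-(x*s)^2/2))
      = b*c/(b⁻¹+c^2) + b*Real.sqrt b*Real.arctan (c*Real.sqrt b) := by
    have hsetJ : ∀ x : ℝ, (x^3 * Real.exp (-(2*b)⁻¹*x^2) * ∫ s in (0:ℝ)..c, Real.exp (-(x*s)^2/2))
        = ∫ s in Ioc (0:ℝ) c, x^3 * Real.exp (-(2*b)⁻¹*x^2) * Real.exp (-(x*s)^2/2) := by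
      intro x
      rw [intervalIntegral.integral_of_le hc.le, MeasureTheory.integral_const_mul]
    simp_rw [hsetJ]
    have hswap := MeasureTheory.integral_integral_swap
      (μ := volume.restrict (Ioi (0:ℝ))) (ν := volume.restrict (Ioc (0:ℝ) c))
      (f := fun x s => x^3 * Real.exp (-(2*b)⁻¹*x^2) * Real.exp (-(x*s)^2/2)) ?_
    · rw [hswap]
      have hinner : ∀ s ∈ Ioc (0:ℝ) c,
          (∫ x in Ioi (0:ℝ), x^3 * Real.exp (-(2*b)⁻¹*x^2) * Real.exp (-(x*s)^2/2))
          = 2/(b⁻¹+s^2)^2 := by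
        intro s _
        have hcomb : ∀ x : ℝ, x^3 * Real.exp (-(2*b)⁻¹*x^2) * Real.exp (-(x*s)^2/2)
            = x^3 * Real.exp (-((2*b)⁻¹+s^2/2) * x^2) := by
          intro x
          rw [mul_assoc, ← Real.exp_add]
          congr 2
          ring
        simp_rw [hcomb]
        have has : (0:ℝ) < (2*b)⁻¹+s^2/2 := by positivity
        rw [moment3 _ has]
        rw [show (2*b)⁻¹+s^2/2 = (b⁻¹+s^2)/2 by field_simp]
        have hne : b⁻¹+s^2 ≠ 0 := by positivity
        field_simp
      rw [MeasureTheory.setIntegral_congr_fun measurableSet_Ioc hinner,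
        ← intervalIntegral.integral_of_le hc.le, Fint b hb0 c]
    · -- integrability on the product
      have hg3 : Integrable (fun p : ℝ×ℝ => p.1^3 * Real.exp (-(2*b)⁻¹*p.1^2) * (1:ℝ))
          ((volume.restrict (Ioi (0:ℝ))).prod (volume.restrict (Ioc (0:ℝ) c))) :=
        (pow_int_on (2*b)⁻¹ h2b 3).mul_prod (integrable_const 1)
      simp only [mul_one] at hg3
      apply Integrable.mono' hg3
      · apply Continuous.aestronglyMeasurable
        fun_prop
      · have hae : ∀ᵐ p ∂((volume.restrict (Ioi (0:ℝ))).prod (volume.restrict (Ioc (0:ℝ) c))),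
            p ∈ (Ioi (0:ℝ)) ×ˢ (Ioc (0:ℝ) c) := by
          rw [Measure.prod_restrict]
          exact ae_restrict_mem (measurableSet_Ioi.prod measurableSet_Ioc)
        filter_upwards [hae] with p hp
        have hx0 : (0:ℝ) < p.1 := hp.1
        have he1 : Real.exp (-(p.1*p.2)^2/2) ≤ 1 :=
          Real.exp_le_one_iff.mpr (by nlinarith [sq_nonneg (p.1*p.2)])
        rw [Function.uncurry_def, Real.norm_eq_abs, abs_of_pos (by positivity)]
        calc p.1^3 * Real.exp (-(2*b)⁻¹*p.1^2) * Real.exp (-(p.1*p.2)^2/2)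
            ≤ p.1^3 * Real.exp (-(2*b)⁻¹*p.1^2) * 1 :=
              mul_le_mul_of_nonneg_left he1 (by positivity)
          _ = p.1^3 * Real.exp (-(2*b)⁻¹*p.1^2) := by ring
  rw [hA]
  -- final algebra
  have hsqb : Real.sqrt b * Real.sqrt b = b := Real.mul_self_sqrt hb0.le
  have hsq1b : Real.sqrt (1-b^2) * Real.sqrt (1-b^2) = 1-b^2 := Real.mul_self_sqrt hbsq.le
  have h2πsq : Real.sqrt (2*π) * Real.sqrt (2*π) = 2*π := Real.mul_self_sqrt (by positivity)
  have hσ' : σ = Real.sqrt (1-b^2) / Real.sqrt b := by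
    rw [hσdef, show b⁻¹ - b = (1-b^2)/b by field_simp, Real.sqrt_div hbsq.le]
  have hcval : c = Real.sqrt b / Real.sqrt (1-b^2) := by
    rw [hcdef, hσ', inv_div]
  have hc2 : c^2 = b/(1-b^2) := by
    rw [hcval, div_pow, sq, hsqb, sq, hsq1b]
  have hden : b⁻¹ + c^2 = 1/(b*(1-b^2)) := by
    rw [hc2]; field_simp; ring
  have harg : c * Real.sqrt b = b / Real.sqrt (1-b^2) := by
    rw [hcval, div_mul_eq_mul_div, hsqb]
  have harctan : Real.arctan (c * Real.sqrt b) = π/2 - Real.arctan (Real.sqrt (1-b^2)/b) := by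
    have h := Real.arctan_inv_of_pos (x := b/Real.sqrt (1-b^2)) (by positivity)
    rw [inv_div] at h
    rw [harg]; linarith
  have hterm1 : b*c/(b⁻¹+c^2) = b^2 * Real.sqrt b * Real.sqrt (1-b^2) := by
    rw [hden, hcval]
    field_simp
    linear_combination (-1) * hsq1b
  have hE1 : Real.sqrt (π/(2*b)⁻¹) = Real.sqrt (2*π) * Real.sqrt b := by
    rw [show π/(2*b)⁻¹ = (2*π)*b by field_simp, Real.sqrt_mul (by positivity) b]
  rw [hE1, hterm1, harctan]
  have hQ : Real.sqrt 2 * Real.sqrt π * (Real.sqrt 2 * Real.sqrt π) = 2*π := by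
    rw [← Real.sqrt_mul (by norm_num) π]; exact h2πsq
  field_simp
  linear_combination 2 * h2πsq
end

section
/- Let C ∈ R^{n×n} be the matrix with entries C_{ik} = C_{ki} = i(n+1−k)/(n+1) for i ≤ k, let K ⊆ {1,…,n} be nonempty with elements K(1) < ⋯ < K(|K|), and set K(0) = 0, K(|K|+1) = n+1. Then C_{K,K} is invertible, and the matrix X̃ = C_{:,K} C_{K,K}^{−1} ∈ R^{n×|K|} satisfies, for every i ∈ {1,…,n} and k ∈ {1,…,|K|}: X̃_{i,k} = 0 if i ≤ K(k−1) or i > K(k+1); X̃_{i,k} = (i − K(k−1))/(K(k) − K(k−1)) if K(k−1) ≤ i ≤ K(k); and X̃_{i,k} = (K(k+1) − i)/(K(k+1) − K(k)) if K(k) < i ≤ K(k+1). In particular, rows of X̃ are linear-spline interpolations (hat functions) with knots at the elements of K. -/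
noncomputable def gr (T x y : ℝ) : ℝ := if x ≤ y then x*(T-y)/T else y*(T-x)/T

lemma gr_le (T x y : ℝ) (h : x ≤ y) : gr T x y = x*(T-y)/T := if_pos h

lemma gr_ge (T x y : ℝ) (h : y ≤ x) : gr T x y = y*(T-x)/T := by
  unfold gr; split_ifs with h'
  · have : x = y := le_antisymm h' h
    rw [this]
  · rfl

lemma gr_symm (T x y : ℝ) : gr T x y = gr T y x := by
  rcases le_total x y with h | h
  · rw [gr_le T x y h, gr_ge T y x h]
  · rw [gr_ge T x y h, gr_le T y x h]

lemma gr_zero (T y : ℝ) (h : 0 ≤ y) : gr T 0 y = 0 := by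
  rw [gr_le T 0 y h]; ring

lemma gr_top (T y : ℝ) (h : y ≤ T) : gr T T y = 0 := by
  rw [gr_ge T T y h]; ring

lemma gr_affine (T a t b s : ℝ) (h1 : a ≤ t) (h2 : t ≤ b) (hs : s ≤ a ∨ b ≤ s) :
    (b - a) * gr T t s = (b - t) * gr T a s + (t - a) * gr T b s := by
  rcases hs with hs | hs
  · rw [gr_ge T t s (hs.trans h1), gr_ge T a s hs, gr_ge T b s (hs.trans (h1.trans h2))]
    ring
  · rw [gr_le T t s (h2.trans hs), gr_le T a s ((h1.trans h2).trans hs), gr_le T b s hs]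
    ring

lemma gr_delta_eq (T u v w : ℝ) (hT : T ≠ 0) (h0 : u < v) (h1 : v < w) :
    (gr T v v - gr T v u)/(v-u) - (gr T v w - gr T v v)/(w-v) = 1 := by
  rw [gr_le T v v le_rfl, gr_ge T v u h0.le, gr_le T v w h1.le]
  have hu : v - u ≠ 0 := by linarith
  have hw : w - v ≠ 0 := by linarith
  field_simp
  ring

lemma gr_delta_ne (T x u v w : ℝ) (hT : T ≠ 0) (h0 : u < v) (h1 : v < w)
    (hx : x ≤ u ∨ w ≤ x) :
    (gr T x v - gr T x u)/(v-u) - (gr T x w - gr T x v)/(w-v) = 0 := by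
  have hu : v - u ≠ 0 := by linarith
  have hw : w - v ≠ 0 := by linarith
  rcases hx with hx | hx
  · rw [gr_le T x u hx, gr_le T x v (hx.trans h0.le), gr_le T x w (hx.trans (h0.trans h1).le)]
    field_simp
    ring
  · rw [gr_ge T x u ((h0.trans h1).le.trans hx), gr_ge T x v (h1.le.trans hx), gr_ge T x w hx]
    field_simp
    ring

lemma fin_sum_if {p : ℕ} (t : ℕ) (f : Fin p → ℝ) :
    (∑ b : Fin p, if (b : ℕ) = t then f b else 0) =
      if h : t < p then f ⟨t, h⟩ else 0 := by
  split_ifs with h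
  · rw [Finset.sum_eq_single (⟨t, h⟩ : Fin p)]
    · simp
    · intro b _ hb
      rw [if_neg]
      exact fun hc => hb (Fin.ext hc)
    · intro hb
      exact absurd (Finset.mem_univ _) hb
  · apply Finset.sum_eq_zero
    intro b _
    rw [if_neg]
    have := b.isLt
    omega

/-- interpolation property of the FLSA normal matrix.
`C ∈ ℝ^{n×n}` has entries `C_{ik} = C_{ki} = i(n+1−k)/(n+1)` for `i ≤ k` (1-indexed).
The set `K = {κ 1 < ⋯ < κ p} ⊆ {1,…,n}` is encoded by a strictly increasing `κ` with
`κ 0 = 0`, `κ (p+1) = n+1`, and `e : Fin p → Fin n` are the corresponding indices.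
Then `C_{K,K}` is invertible and `X̃ = C_{:,K} C_{K,K}⁻¹` consists of hat functions
with knots at the elements of `K`. -/
theorem stmt8 (n p : ℕ) (hp : 1 ≤ p) (hpn : p ≤ n)
    (C : Matrix (Fin n) (Fin n) ℝ)
    (hC : ∀ i k : Fin n, (i : ℕ) ≤ (k : ℕ) →
      C i k = ((i : ℝ) + 1) * ((n : ℝ) + 1 - ((k : ℝ) + 1)) / ((n : ℝ) + 1) ∧ C k i = C i k)
    (κ : ℕ → ℕ) (hκ0 : κ 0 = 0) (hκlast : κ (p + 1) = n + 1)
    (hκmono : ∀ j, j ≤ p → κ j < κ (j + 1))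
    (e : Fin p → Fin n) (he : ∀ j : Fin p, (e j : ℕ) + 1 = κ ((j : ℕ) + 1))
    (CKK : Matrix (Fin p) (Fin p) ℝ)
    (hCKK : CKK = Matrix.of fun a b : Fin p => C (e a) (e b))
    (X : Matrix (Fin n) (Fin p) ℝ)
    (hX : X = (Matrix.of fun (i : Fin n) (b : Fin p) => C i (e b)) * CKK⁻¹) :
    CKK.det ≠ 0 ∧
    ∀ (i : Fin n) (k : Fin p),
      (((i : ℕ) + 1 ≤ κ (k : ℕ) ∨ κ ((k : ℕ) + 2) < (i : ℕ) + 1) → X i k = 0) ∧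
      (κ (k : ℕ) ≤ (i : ℕ) + 1 → (i : ℕ) + 1 ≤ κ ((k : ℕ) + 1) →
        X i k = (((i : ℕ) : ℝ) + 1 - (κ (k : ℕ) : ℝ))
          / ((κ ((k : ℕ) + 1) : ℝ) - (κ (k : ℕ) : ℝ))) ∧
      (κ ((k : ℕ) + 1) < (i : ℕ) + 1 → (i : ℕ) + 1 ≤ κ ((k : ℕ) + 2) →
        X i k = ((κ ((k : ℕ) + 2) : ℝ) - (((i : ℕ) : ℝ) + 1))
          / ((κ ((k : ℕ) + 2) : ℝ) - (κ ((k : ℕ) + 1) : ℝ))) := by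
  set T : ℝ := (n : ℝ) + 1 with hTdef
  have hTpos : (0:ℝ) < T := by positivity
  have hT0 : T ≠ 0 := ne_of_gt hTpos
  -- monotonicity
  have hlt : ∀ a b : ℕ, a < b → b ≤ p + 1 → κ a < κ b := by
    intro a b hab hb
    induction b with
    | zero => omega
    | succ b ih =>
      rcases Nat.lt_succ_iff_lt_or_eq.mp hab with h | h
      · exact (ih h (by omega)).trans (hκmono b (by omega))
      · subst h; exact hκmono a (by omega)
  have hle : ∀ a b : ℕ, a ≤ b → b ≤ p + 1 → κ a ≤ κ b := by
    intro a b hab hb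
    rcases eq_or_lt_of_le hab with h | h
    · exact le_of_eq (congrArg κ h)
    · exact (hlt a b h hb).le
  -- C in terms of gr
  have hCg : ∀ a b : Fin n, C a b = gr T (((a:ℕ):ℝ) + 1) (((b:ℕ):ℝ) + 1) := by
    intro a b
    rcases le_total (a:ℕ) (b:ℕ) with h | h
    · rw [(hC a b h).1, gr_le T _ _ (by exact_mod_cast Nat.succ_le_succ h)]
    · rw [(hC b a h).2, (hC b a h).1, gr_ge T _ _ (by exact_mod_cast Nat.succ_le_succ h)]
  have heR : ∀ j : Fin p, ((e j : ℕ) : ℝ) + 1 = ((κ ((j:ℕ)+1) : ℕ) : ℝ) := by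
    intro j
    exact_mod_cast congrArg (fun m : ℕ => (m : ℝ)) (he j)
  -- the hat-function matrix
  set Y : Matrix (Fin n) (Fin p) ℝ := Matrix.of (fun (i : Fin n) (k : Fin p) =>
    if κ (k:ℕ) ≤ (i:ℕ)+1 ∧ (i:ℕ)+1 ≤ κ ((k:ℕ)+1) then
      (((i:ℕ):ℝ) + 1 - (κ (k:ℕ) : ℝ)) / ((κ ((k:ℕ)+1) : ℝ) - (κ (k:ℕ) : ℝ))
    else if κ ((k:ℕ)+1) < (i:ℕ)+1 ∧ (i:ℕ)+1 ≤ κ ((k:ℕ)+2) then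
      ((κ ((k:ℕ)+2) : ℝ) - (((i:ℕ):ℝ)+1)) / ((κ ((k:ℕ)+2) : ℝ) - (κ ((k:ℕ)+1) : ℝ))
    else 0) with hYdef
  -- reproduction property
  have hrep : ∀ (i : Fin n) (q : ℕ), q ≤ p + 1 →
      (∑ j : Fin p, Y i j * gr T ((κ ((j:ℕ)+1) : ℕ) : ℝ) ((κ q : ℕ) : ℝ))
        = gr T (((i:ℕ):ℝ) + 1) ((κ q : ℕ) : ℝ) := by
    intro i q hq
    set s : ℝ := ((κ q : ℕ) : ℝ) with hsdef
    have hs0 : 0 ≤ s := by positivity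
    have hsT : s ≤ T := by
      have : κ q ≤ n + 1 := by rw [← hκlast]; exact hle q (p+1) hq le_rfl
      rw [hsdef, hTdef]
      exact_mod_cast this
    -- find the interval containing i+1
    have hex : ∃ m, m ≤ p ∧ κ m < (i:ℕ)+1 ∧ (i:ℕ)+1 ≤ κ (m+1) := by
      set M := Nat.findGreatest (fun j => κ j < (i:ℕ)+1) p with hM
      have hMp : M ≤ p := Nat.findGreatest_le p
      have hM0 : κ M < (i:ℕ)+1 := by
        have := Nat.findGreatest_spec (P := fun j => κ j < (i:ℕ)+1)
          (Nat.zero_le p) (show κ 0 < (i:ℕ)+1 by omega)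
        rw [← hM] at this
        exact this
      refine ⟨M, hMp, hM0, ?_⟩
      by_cases hmp' : M = p
      · have hlast : κ (M + 1) = n + 1 := by rw [hmp', hκlast]
        have hi := i.isLt
        omega
      · have hgt : ¬ (κ (M+1) < (i:ℕ)+1) :=
          Nat.findGreatest_is_greatest (P := fun j => κ j < (i:ℕ)+1) (n := p)
            (by omega) (by omega)
        omega
    obtain ⟨m, hmp, hm1, hm2⟩ := hex
    have hmm : κ m < κ (m+1) := hκmono m hmp
    have key : ∀ j : Fin p,
        Y i j * gr T ((κ ((j:ℕ)+1) : ℕ) : ℝ) s =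
          (if (j:ℕ)+1 = m then
            (((κ (m+1) : ℕ):ℝ) - (((i:ℕ):ℝ)+1)) / (((κ (m+1) : ℕ):ℝ) - ((κ m : ℕ):ℝ))
              * gr T ((κ m : ℕ) : ℝ) s
           else 0) +
          (if (j:ℕ) = m then
            ((((i:ℕ):ℝ)+1) - ((κ m : ℕ):ℝ)) / (((κ (m+1) : ℕ):ℝ) - ((κ m : ℕ):ℝ))
              * gr T ((κ (m+1) : ℕ) : ℝ) s
           else 0) := by
      intro j
      have hjp : (j:ℕ) < p := j.isLt
      rw [hYdef]
      simp only [Matrix.of_apply]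
      rcases Nat.lt_trichotomy ((j:ℕ)+1) m with hc | hc | hc
      · have h2 : κ ((j:ℕ)+2) ≤ κ m := hle _ _ (by omega) (by omega)
        have h3 : κ ((j:ℕ)+1) < κ ((j:ℕ)+2) := hκmono _ (by omega)
        rw [if_neg (show ¬(κ (j:ℕ) ≤ (i:ℕ)+1 ∧ (i:ℕ)+1 ≤ κ ((j:ℕ)+1)) by omega),
          if_neg (show ¬(κ ((j:ℕ)+1) < (i:ℕ)+1 ∧ (i:ℕ)+1 ≤ κ ((j:ℕ)+2)) by omega),
          if_neg (show ¬((j:ℕ)+1 = m) by omega),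
          if_neg (show ¬((j:ℕ) = m) by omega)]
        ring
      · have hj1 : κ ((j:ℕ)+1) = κ m := by rw [hc]
        have hj2' : κ ((j:ℕ)+2) = κ (m+1) := by rw [(show (j:ℕ)+2 = m+1 by omega)]
        rw [if_neg (show ¬(κ (j:ℕ) ≤ (i:ℕ)+1 ∧ (i:ℕ)+1 ≤ κ ((j:ℕ)+1)) by omega),
          if_pos (show κ ((j:ℕ)+1) < (i:ℕ)+1 ∧ (i:ℕ)+1 ≤ κ ((j:ℕ)+2) by omega),
          if_pos hc, if_neg (show ¬((j:ℕ) = m) by omega)]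
        rw [hj1, hj2']
        ring
      · by_cases hjm : (j:ℕ) = m
        · rw [hjm]
          rw [if_pos (show κ m ≤ (i:ℕ)+1 ∧ (i:ℕ)+1 ≤ κ (m+1) by omega),
            if_neg (show ¬(m+1 = m) by omega), if_pos rfl]
          ring
        · have hk1 : κ (m+1) ≤ κ ((j:ℕ)) := hle _ _ (by omega) (by omega)
          have hk2 : κ (m+1) ≤ κ ((j:ℕ)+1) := hle _ _ (by omega) (by omega)
          rw [if_neg (show ¬((j:ℕ)+1 = m) by omega),
            if_neg (show ¬((j:ℕ) = m) by omega)]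
          by_cases h1 : κ (j:ℕ) ≤ (i:ℕ)+1 ∧ (i:ℕ)+1 ≤ κ ((j:ℕ)+1)
          · rw [if_pos h1]
            have hx : κ (j:ℕ) = (i:ℕ)+1 := by omega
            rw [show ((κ (j:ℕ) : ℕ):ℝ) = ((i:ℕ):ℝ)+1 by rw [hx]; push_cast; ring]
            simp
          · rw [if_neg h1,
              if_neg (show ¬(κ ((j:ℕ)+1) < (i:ℕ)+1 ∧ (i:ℕ)+1 ≤ κ ((j:ℕ)+2)) by omega)]
            ring
    rw [Finset.sum_congr rfl (fun j _ => key j), Finset.sum_add_distrib]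
    have hS1 : (∑ j : Fin p, if (j:ℕ)+1 = m then
        (((κ (m+1) : ℕ):ℝ) - (((i:ℕ):ℝ)+1)) / (((κ (m+1) : ℕ):ℝ) - ((κ m : ℕ):ℝ))
          * gr T ((κ m : ℕ) : ℝ) s else 0) =
        (((κ (m+1) : ℕ):ℝ) - (((i:ℕ):ℝ)+1)) / (((κ (m+1) : ℕ):ℝ) - ((κ m : ℕ):ℝ))
          * gr T ((κ m : ℕ) : ℝ) s := by
      by_cases hm0 : m = 0
      · rw [Finset.sum_eq_zero (fun j _ => if_neg (by omega))]
        have hz : gr T ((κ m : ℕ) : ℝ) s = 0 := by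
          rw [hm0, hκ0]
          exact_mod_cast gr_zero T s hs0
        rw [hz, mul_zero]
      · have hcong : ∀ j : Fin p, (if (j:ℕ)+1 = m then
            (((κ (m+1) : ℕ):ℝ) - (((i:ℕ):ℝ)+1)) / (((κ (m+1) : ℕ):ℝ) - ((κ m : ℕ):ℝ))
              * gr T ((κ m : ℕ) : ℝ) s else 0) =
            (if (j:ℕ) = m - 1 then
            (((κ (m+1) : ℕ):ℝ) - (((i:ℕ):ℝ)+1)) / (((κ (m+1) : ℕ):ℝ) - ((κ m : ℕ):ℝ))
              * gr T ((κ m : ℕ) : ℝ) s else 0) := by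
          intro j
          congr 1
          exact propext (by omega)
        rw [Finset.sum_congr rfl (fun j _ => hcong j), fin_sum_if,
          dif_pos (show m - 1 < p by omega)]
    have hS2 : (∑ j : Fin p, if (j:ℕ) = m then
        ((((i:ℕ):ℝ)+1) - ((κ m : ℕ):ℝ)) / (((κ (m+1) : ℕ):ℝ) - ((κ m : ℕ):ℝ))
          * gr T ((κ (m+1) : ℕ) : ℝ) s else 0) =
        ((((i:ℕ):ℝ)+1) - ((κ m : ℕ):ℝ)) / (((κ (m+1) : ℕ):ℝ) - ((κ m : ℕ):ℝ))
          * gr T ((κ (m+1) : ℕ) : ℝ) s := by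
      by_cases hmp' : m = p
      · rw [Finset.sum_eq_zero (fun j _ => if_neg (by have := j.isLt; omega))]
        have hz : gr T ((κ (m+1) : ℕ) : ℝ) s = 0 := by
          rw [hmp', hκlast]
          rw [show (((n+1 : ℕ)):ℝ) = T by rw [hTdef]; push_cast; ring]
          exact gr_top T s hsT
        rw [hz, mul_zero]
      · rw [fin_sum_if, dif_pos (show m < p by omega)]
    rw [hS1, hS2]
    have hba : ((κ (m+1) : ℕ):ℝ) - ((κ m : ℕ):ℝ) ≠ 0 := by
      have : ((κ m : ℕ):ℝ) < ((κ (m+1) : ℕ):ℝ) := by exact_mod_cast hmm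
      linarith
    have h1' : ((κ m : ℕ):ℝ) ≤ ((i:ℕ):ℝ)+1 := by
      have hh : κ m ≤ (i:ℕ)+1 := by omega
      exact_mod_cast hh
    have h2' : ((i:ℕ):ℝ)+1 ≤ ((κ (m+1) : ℕ):ℝ) := by exact_mod_cast hm2
    have hs' : s ≤ ((κ m : ℕ):ℝ) ∨ ((κ (m+1) : ℕ):ℝ) ≤ s := by
      rcases le_or_gt q m with h | h
      · left
        rw [hsdef]
        exact_mod_cast hle q m h (by omega)
      · right
        rw [hsdef]
        exact_mod_cast hle (m+1) q (by omega) hq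
    have haff := gr_affine T ((κ m : ℕ):ℝ) (((i:ℕ):ℝ)+1) ((κ (m+1) : ℕ):ℝ) s h1' h2' hs'
    have hkey2 : gr T (((i:ℕ):ℝ)+1) s =
        ((((κ (m+1) : ℕ):ℝ) - (((i:ℕ):ℝ)+1)) * gr T ((κ m : ℕ):ℝ) s
          + ((((i:ℕ):ℝ)+1) - ((κ m : ℕ):ℝ)) * gr T ((κ (m+1) : ℕ):ℝ) s)
          / (((κ (m+1) : ℕ):ℝ) - ((κ m : ℕ):ℝ)) := by
      rw [eq_div_iff hba, mul_comm]
      exact haff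
    rw [hkey2]
    ring
  -- Y * CKK reproduces the columns of C at K
  have hYC : Y * CKK = Matrix.of (fun (i : Fin n) (b : Fin p) => C i (e b)) := by
    ext i k
    rw [Matrix.mul_apply]
    simp only [Matrix.of_apply, hCKK]
    have hterm : ∀ j : Fin p, Y i j * C (e j) (e k) =
        Y i j * gr T ((κ ((j:ℕ)+1) : ℕ):ℝ) ((κ ((k:ℕ)+1) : ℕ):ℝ) := by
      intro j
      rw [hCg (e j) (e k), heR j, heR k]
    rw [Finset.sum_congr rfl (fun j _ => hterm j), hrep i ((k:ℕ)+1) (by omega),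
      hCg i (e k), heR k]
  -- the explicit tridiagonal right inverse of CKK
  set B : Matrix (Fin p) (Fin p) ℝ := Matrix.of (fun (b c : Fin p) =>
    (if (b:ℕ) = (c:ℕ) then
        1/(((κ ((c:ℕ)+1) : ℕ):ℝ) - ((κ (c:ℕ) : ℕ):ℝ))
          + 1/(((κ ((c:ℕ)+2) : ℕ):ℝ) - ((κ ((c:ℕ)+1) : ℕ):ℝ)) else 0) +
    (if (b:ℕ)+1 = (c:ℕ) then
        -(1/(((κ ((c:ℕ)+1) : ℕ):ℝ) - ((κ (c:ℕ) : ℕ):ℝ))) else 0) +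
    (if (b:ℕ) = (c:ℕ)+1 then
        -(1/(((κ ((c:ℕ)+2) : ℕ):ℝ) - ((κ ((c:ℕ)+1) : ℕ):ℝ))) else 0)) with hBdef
  have hCB : CKK * B = 1 := by
    ext a c
    rw [Matrix.mul_apply]
    have hCKa : ∀ b : Fin p, CKK a b =
        gr T ((κ ((a:ℕ)+1) : ℕ):ℝ) ((κ ((b:ℕ)+1) : ℕ):ℝ) := by
      intro b
      rw [hCKK]
      simp only [Matrix.of_apply]
      rw [hCg (e a) (e b), heR a, heR b]
    have hxT : ((κ ((a:ℕ)+1) : ℕ):ℝ) ≤ T := by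
      have : κ ((a:ℕ)+1) ≤ n + 1 := by
        rw [← hκlast]; exact hle _ _ (by have := a.isLt; omega) le_rfl
      rw [hTdef]
      exact_mod_cast this
    have hx0 : (0:ℝ) ≤ ((κ ((a:ℕ)+1) : ℕ):ℝ) := by positivity
    have hterm : ∀ b : Fin p, CKK a b * B b c =
        (if (b:ℕ) = (c:ℕ) then
          gr T ((κ ((a:ℕ)+1) : ℕ):ℝ) ((κ ((c:ℕ)+1) : ℕ):ℝ)
            * (1/(((κ ((c:ℕ)+1) : ℕ):ℝ) - ((κ (c:ℕ) : ℕ):ℝ))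
              + 1/(((κ ((c:ℕ)+2) : ℕ):ℝ) - ((κ ((c:ℕ)+1) : ℕ):ℝ))) else 0) +
        (if (b:ℕ)+1 = (c:ℕ) then
          gr T ((κ ((a:ℕ)+1) : ℕ):ℝ) ((κ (c:ℕ) : ℕ):ℝ)
            * (-(1/(((κ ((c:ℕ)+1) : ℕ):ℝ) - ((κ (c:ℕ) : ℕ):ℝ)))) else 0) +
        (if (b:ℕ) = (c:ℕ)+1 then
          gr T ((κ ((a:ℕ)+1) : ℕ):ℝ) ((κ ((c:ℕ)+2) : ℕ):ℝ)
            * (-(1/(((κ ((c:ℕ)+2) : ℕ):ℝ) - ((κ ((c:ℕ)+1) : ℕ):ℝ)))) else 0) := by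
      intro b
      rw [hCKa b, hBdef]
      simp only [Matrix.of_apply]
      rw [mul_add, mul_add, mul_ite, mul_zero, mul_ite, mul_zero, mul_ite, mul_zero]
      congr 1
      · congr 1
        · by_cases hbc : (b:ℕ) = (c:ℕ)
          · rw [if_pos hbc, if_pos hbc, show (b:ℕ)+1 = (c:ℕ)+1 by omega]
          · rw [if_neg hbc, if_neg hbc]
        · by_cases hbc : (b:ℕ)+1 = (c:ℕ)
          · rw [if_pos hbc, if_pos hbc, show (b:ℕ)+1 = (c:ℕ) by omega]
          · rw [if_neg hbc, if_neg hbc]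
      · by_cases hbc : (b:ℕ) = (c:ℕ)+1
        · rw [if_pos hbc, if_pos hbc, show (b:ℕ)+1 = (c:ℕ)+2 by omega]
        · rw [if_neg hbc, if_neg hbc]
    rw [Finset.sum_congr rfl (fun b _ => hterm b), Finset.sum_add_distrib,
      Finset.sum_add_distrib]
    have hS1 : (∑ b : Fin p, if (b:ℕ) = (c:ℕ) then
        gr T ((κ ((a:ℕ)+1) : ℕ):ℝ) ((κ ((c:ℕ)+1) : ℕ):ℝ)
          * (1/(((κ ((c:ℕ)+1) : ℕ):ℝ) - ((κ (c:ℕ) : ℕ):ℝ))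
            + 1/(((κ ((c:ℕ)+2) : ℕ):ℝ) - ((κ ((c:ℕ)+1) : ℕ):ℝ))) else 0) =
        gr T ((κ ((a:ℕ)+1) : ℕ):ℝ) ((κ ((c:ℕ)+1) : ℕ):ℝ)
          * (1/(((κ ((c:ℕ)+1) : ℕ):ℝ) - ((κ (c:ℕ) : ℕ):ℝ))
            + 1/(((κ ((c:ℕ)+2) : ℕ):ℝ) - ((κ ((c:ℕ)+1) : ℕ):ℝ))) := by
      rw [fin_sum_if, dif_pos c.isLt]
    have hS2 : (∑ b : Fin p, if (b:ℕ)+1 = (c:ℕ) then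
        gr T ((κ ((a:ℕ)+1) : ℕ):ℝ) ((κ (c:ℕ) : ℕ):ℝ)
          * (-(1/(((κ ((c:ℕ)+1) : ℕ):ℝ) - ((κ (c:ℕ) : ℕ):ℝ)))) else 0) =
        gr T ((κ ((a:ℕ)+1) : ℕ):ℝ) ((κ (c:ℕ) : ℕ):ℝ)
          * (-(1/(((κ ((c:ℕ)+1) : ℕ):ℝ) - ((κ (c:ℕ) : ℕ):ℝ)))) := by
      by_cases hc0 : (c:ℕ) = 0
      · rw [Finset.sum_eq_zero (fun b _ => if_neg (by omega))]
        have hz : gr T ((κ ((a:ℕ)+1) : ℕ):ℝ) ((κ (c:ℕ) : ℕ):ℝ) = 0 := by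
          rw [hc0, hκ0]
          rw [show (((0:ℕ)):ℝ) = (0:ℝ) by norm_num]
          rw [gr_symm]
          exact gr_zero T _ hx0
        rw [hz, zero_mul]
      · have hcong : ∀ b : Fin p, (if (b:ℕ)+1 = (c:ℕ) then
            gr T ((κ ((a:ℕ)+1) : ℕ):ℝ) ((κ (c:ℕ) : ℕ):ℝ)
              * (-(1/(((κ ((c:ℕ)+1) : ℕ):ℝ) - ((κ (c:ℕ) : ℕ):ℝ)))) else 0) =
            (if (b:ℕ) = (c:ℕ)-1 then
            gr T ((κ ((a:ℕ)+1) : ℕ):ℝ) ((κ (c:ℕ) : ℕ):ℝ)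
              * (-(1/(((κ ((c:ℕ)+1) : ℕ):ℝ) - ((κ (c:ℕ) : ℕ):ℝ)))) else 0) := by
          intro b
          congr 1
          exact propext (by omega)
        rw [Finset.sum_congr rfl (fun b _ => hcong b), fin_sum_if,
          dif_pos (show (c:ℕ)-1 < p by have := c.isLt; omega)]
    have hS3 : (∑ b : Fin p, if (b:ℕ) = (c:ℕ)+1 then
        gr T ((κ ((a:ℕ)+1) : ℕ):ℝ) ((κ ((c:ℕ)+2) : ℕ):ℝ)
          * (-(1/(((κ ((c:ℕ)+2) : ℕ):ℝ) - ((κ ((c:ℕ)+1) : ℕ):ℝ)))) else 0) =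
        gr T ((κ ((a:ℕ)+1) : ℕ):ℝ) ((κ ((c:ℕ)+2) : ℕ):ℝ)
          * (-(1/(((κ ((c:ℕ)+2) : ℕ):ℝ) - ((κ ((c:ℕ)+1) : ℕ):ℝ)))) := by
      rw [fin_sum_if]
      by_cases hcp : (c:ℕ)+1 < p
      · rw [dif_pos hcp]
      · rw [dif_neg hcp]
        have hc2 : (c:ℕ)+2 = p+1 := by have := c.isLt; omega
        have hz : gr T ((κ ((a:ℕ)+1) : ℕ):ℝ) ((κ ((c:ℕ)+2) : ℕ):ℝ) = 0 := by
          rw [hc2, hκlast, show (((n+1:ℕ)):ℝ) = T by rw [hTdef]; push_cast; ring,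
            gr_symm]
          exact gr_top T _ hxT
        rw [hz, zero_mul]
    rw [hS1, hS2, hS3]
    have huv : ((κ (c:ℕ) : ℕ):ℝ) < ((κ ((c:ℕ)+1) : ℕ):ℝ) := by
      exact_mod_cast hκmono (c:ℕ) (by have := c.isLt; omega)
    have hvw : ((κ ((c:ℕ)+1) : ℕ):ℝ) < ((κ ((c:ℕ)+2) : ℕ):ℝ) := by
      exact_mod_cast hκmono ((c:ℕ)+1) (by have := c.isLt; omega)
    by_cases hac : a = c
    · subst hac
      rw [Matrix.one_apply_eq]
      linear_combination
        gr_delta_eq T ((κ (a:ℕ) : ℕ):ℝ) ((κ ((a:ℕ)+1) : ℕ):ℝ) ((κ ((a:ℕ)+2) : ℕ):ℝ)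
          hT0 huv hvw
    · rw [Matrix.one_apply_ne hac]
      have hside : ((κ ((a:ℕ)+1) : ℕ):ℝ) ≤ ((κ (c:ℕ) : ℕ):ℝ) ∨
          ((κ ((c:ℕ)+2) : ℕ):ℝ) ≤ ((κ ((a:ℕ)+1) : ℕ):ℝ) := by
        have hac' : (a:ℕ) ≠ (c:ℕ) := fun h => hac (Fin.ext h)
        rcases lt_or_gt_of_ne hac' with h | h
        · left
          exact_mod_cast hle _ _ (by omega) (by have := c.isLt; omega)
        · right
          exact_mod_cast hle _ _ (by omega) (by have := a.isLt; omega)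
      linear_combination
        gr_delta_ne T ((κ ((a:ℕ)+1) : ℕ):ℝ) ((κ (c:ℕ) : ℕ):ℝ)
          ((κ ((c:ℕ)+1) : ℕ):ℝ) ((κ ((c:ℕ)+2) : ℕ):ℝ) hT0 huv hvw hside
  -- determinant and inverse
  have hdet1 : CKK.det * B.det = 1 := by
    rw [← Matrix.det_mul, hCB, Matrix.det_one]
  have hdet : CKK.det ≠ 0 := left_ne_zero_of_mul_eq_one hdet1
  have hXY : X = Y := by
    rw [hX, ← hYC, Matrix.mul_nonsing_inv_cancel_right _ _ (IsUnit.of_mul_eq_one _ hdet1)]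
  refine ⟨hdet, fun i k => ⟨?_, ?_, ?_⟩⟩
  · intro h
    rw [hXY, hYdef]
    simp only [Matrix.of_apply]
    have hk1 : κ (k:ℕ) < κ ((k:ℕ)+1) := hκmono _ (by have := k.isLt; omega)
    have hk2 : κ ((k:ℕ)+1) < κ ((k:ℕ)+2) := hκmono _ (by have := k.isLt; omega)
    split_ifs with h1 h2
    · have hz : κ (k:ℕ) = (i:ℕ)+1 := by omega
      rw [show ((κ (k:ℕ) : ℕ):ℝ) = ((i:ℕ):ℝ)+1 by rw [hz]; push_cast; ring]
      simp
    · exfalso; omega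
    · rfl
  · intro h1 h2
    rw [hXY, hYdef]
    simp only [Matrix.of_apply]
    rw [if_pos ⟨h1, h2⟩]
  · intro h1 h2
    rw [hXY, hYdef]
    simp only [Matrix.of_apply]
    rw [if_neg (show ¬(κ (k:ℕ) ≤ (i:ℕ)+1 ∧ (i:ℕ)+1 ≤ κ ((k:ℕ)+1)) by omega),
      if_pos ⟨h1, h2⟩]
end

section
/- Let C ∈ R^{n×n} with C_{ik} = i(n+1−k)/(n+1) for i ≤ k and C symmetric, let K ⊆ {1,…,n}, and suppose i lies strictly between two consecutive elements K(k̃) and K(k̃+1) of K (with the conventions K(0)=0, K(|K|+1)=n+1). Then the column vector C_{K,i} depends affinely on i in this range: C_{K(j),i} = C_{K(j),K(k̃)} + (K(j)/(n+1))(K(k̃) − i) for K(j) ≤ K(k̃), and C_{K(j),i} = C_{K(j),K(k̃)} + ((n+1−K(j))/(n+1))(i − K(k̃)) for K(j) > K(k̃). -/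
/-- the columns of the FLSA normal matrix depend affinely on the column index
between two consecutive elements `Ka = K(k̃) < i < Kb = K(k̃+1)` of `K`
(entries extended to all natural indices via the formula `C i k = i(n+1−k)/(n+1)`, `i ≤ k`). -/
theorem stmt9 (n : ℕ) (C : ℕ → ℕ → ℝ)
    (hC : ∀ i k : ℕ, i ≤ k →
      C i k = (i : ℝ) * ((n : ℝ) + 1 - (k : ℝ)) / ((n : ℝ) + 1) ∧ C k i = C i k)
    (Ka Kb i : ℕ) (h1 : Ka < i) (h2 : i < Kb) (h3 : Kb ≤ n + 1) :
    ∀ r, 1 ≤ r → r ≤ n →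
      (r ≤ Ka → C r i = C r Ka + (r : ℝ) / ((n : ℝ) + 1) * ((Ka : ℝ) - (i : ℝ))) ∧
      (Kb ≤ r → C r i = C r Ka + ((n : ℝ) + 1 - (r : ℝ)) / ((n : ℝ) + 1) * ((i : ℝ) - (Ka : ℝ))) := by
  intro r hr1 hrn
  have hne : (n : ℝ) + 1 ≠ 0 := by positivity
  constructor
  · intro hrKa
    have hri : r ≤ i := le_trans hrKa (le_of_lt h1)
    rw [(hC r i hri).1, (hC r Ka hrKa).1]
    field_simp
    ring
  · intro hKbr
    have hir : i ≤ r := le_trans (le_of_lt h2) hKbr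
    have hKar : Ka ≤ r := le_trans (le_of_lt h1) hir
    rw [(hC i r hir).2, (hC i r hir).1, (hC Ka r hKar).2, (hC Ka r hKar).1]
    field_simp
    ring
end

section
/- Fix λ > 0 and suppose σ² = (σ₁²,…,σ_N²) minimizes (1/2)∑_{t=1}^N (y_t² − σ_t²)² + λ∑_{t=2}^N |σ_t² − σ_{t−1}²| over R^N, where y_t ≠ 0 for all t. Then σ_t² > 0 for all t; equivalently, the fused-lasso estimate applied to the squared data y_t² is strictly positive, and hence also solves the penalized Gaussian variance log-likelihood problem min over η_t < 0 of −(1/2)∑ ln(−η_t) − ∑ η_t y_t² + λ∑_{t=2}^N |η_t − η_{t−1}| via η_t = −1/(2σ_t²). -/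
open Finset

/-- Subgradient of `|·|` at `w`, evaluated in a direction `e`. -/
noncomputable def phi17 (w e : ℝ) : ℝ := if w = 0 then |e| else if 0 < w then e else -e

/-- Convexity inequality for the smooth part of the negative log-likelihood. -/
lemma aux17_smooth (V A E : ℝ) (hV : 0 < V) (hE : E < 0) :
    -(1/2) * Real.log (-(-(1/(2*V)))) - (-(1/(2*V))) * A + (V - A) * (E - (-(1/(2*V))))
      ≤ -(1/2) * Real.log (-E) - E * A := by
  have hx : (0:ℝ) < 1/(2*V) := by positivity
  have hlog : Real.log (-E) ≤ Real.log (1/(2*V)) + ((-E) * (2*V) - 1) := by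
    have h1 : Real.log ((-E) * (2*V)) ≤ (-E) * (2*V) - 1 :=
      Real.log_le_sub_one_of_pos (by nlinarith)
    have h2 : Real.log ((-E) * (2*V)) = Real.log (-E) + Real.log (2*V) := by
      rw [Real.log_mul (by linarith) (by positivity)]
    have h3 : Real.log (1/(2*V)) = - Real.log (2*V) := by
      rw [one_div, Real.log_inv]
    linarith
  have h4 : -(-(1/(2*V))) = 1/(2*V) := by ring
  rw [h4]
  have h5 : (V - A) * (E - (-(1/(2*V)))) = V*E + 1/2 - A*E - A*(1/(2*V)) := by
    field_simp
    ring
  nlinarith [hlog]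

/-- Transfer of the total-variation subgradient inequality from `v` to `η = -1/(2v)`. -/
lemma aux17_tv (V1 V2 E1 E2 : ℝ) (h1 : 0 < V1) (h2 : 0 < V2) :
    phi17 (V2 - V1) ((E2 - E1) - ((-(1/(2*V2))) - (-(1/(2*V1)))))
      ≤ |E2 - E1| - |(-(1/(2*V2))) - (-(1/(2*V1)))| := by
  set D : ℝ := (-(1/(2*V2))) - (-(1/(2*V1))) with hD
  have hDeq : D = (V2 - V1) / (2 * V1 * V2) := by
    rw [hD]; field_simp; ring
  unfold phi17
  rcases lt_trichotomy (V2 - V1) 0 with hw | hw | hw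
  · have hDneg : D < 0 := by
      rw [hDeq]; exact div_neg_of_neg_of_pos hw (by positivity)
    rw [if_neg (by linarith), if_neg (by linarith), abs_of_neg hDneg]
    have := neg_abs_le (E2 - E1)
    linarith
  · have hDz : D = 0 := by rw [hDeq, hw, zero_div]
    rw [if_pos hw, hDz]
    simp
  · have hDpos : 0 < D := by
      rw [hDeq]; exact div_pos hw (by positivity)
    rw [if_neg (by linarith), if_pos hw, abs_of_pos hDpos]
    have := le_abs_self (E2 - E1)
    linarith

/-- Exact expansion of `|w + ε e|` for small `ε`. -/
lemma aux17_abs (w e ε : ℝ) (hε : 0 < ε) (h : w ≠ 0 → ε * |e| < |w|) :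
    |w + ε * e| = |w| + ε * phi17 w e := by
  unfold phi17
  rcases lt_trichotomy w 0 with hw | hw | hw
  · have hlt := h (by linarith)
    rw [abs_of_neg hw] at hlt
    have he : ε * e ≤ ε * |e| := mul_le_mul_of_nonneg_left (le_abs_self e) hε.le
    rw [if_neg (by linarith), if_neg (by linarith), abs_of_neg hw,
      abs_of_neg (by linarith : w + ε * e < 0)]
    ring
  · rw [if_pos hw, hw]
    simp [abs_mul, abs_of_pos hε]
  · have hlt := h (by linarith)
    rw [abs_of_pos hw] at hlt
    have he : ε * (-e) ≤ ε * |e| := mul_le_mul_of_nonneg_left (neg_le_abs e) hε.le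
    rw [if_neg (by linarith), if_pos hw, abs_of_pos hw,
      abs_of_pos (by nlinarith : 0 < w + ε * e)]

/-- positivity of the FLSA variance estimate: if `v = σ²` minimizes the
fused lasso objective on the squared data `y_t²` (with all `y_t ≠ 0`), then `v_t > 0` for
all `t`, and via `η_t = −1/(2 v_t)` it also minimizes the penalized Gaussian variance
negative log-likelihood over `η_t < 0` (1-indexed data). -/
theorem stmt17 (N : ℕ) (hN : 1 ≤ N) (y : ℕ → ℝ) (hy : ∀ t ∈ Icc 1 N, y t ≠ 0)
    (lam : ℝ) (hlam : 0 < lam) (v : ℕ → ℝ)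
    (hmin : ∀ g : ℕ → ℝ,
      (1 / 2) * ∑ t ∈ Icc 1 N, (y t ^ 2 - v t) ^ 2 + lam * ∑ t ∈ Icc 2 N, |v t - v (t - 1)|
        ≤ (1 / 2) * ∑ t ∈ Icc 1 N, (y t ^ 2 - g t) ^ 2
          + lam * ∑ t ∈ Icc 2 N, |g t - g (t - 1)|) :
    (∀ t ∈ Icc 1 N, 0 < v t) ∧
    ∀ η' : ℕ → ℝ, (∀ t ∈ Icc 1 N, η' t < 0) →
      -(1 / 2) * ∑ t ∈ Icc 1 N, Real.log (-(-(1 / (2 * v t))))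
          - ∑ t ∈ Icc 1 N, (-(1 / (2 * v t))) * y t ^ 2
          + lam * ∑ t ∈ Icc 2 N, |(-(1 / (2 * v t))) - (-(1 / (2 * v (t - 1))))|
        ≤ -(1 / 2) * ∑ t ∈ Icc 1 N, Real.log (-η' t)
          - ∑ t ∈ Icc 1 N, η' t * y t ^ 2
          + lam * ∑ t ∈ Icc 2 N, |η' t - η' (t - 1)| := by
  -- Part 1 : positivity
  have hv : ∀ t ∈ Icc 1 N, 0 < v t := by
    have hA : ∀ t ∈ Icc 1 N, 0 < y t ^ 2 := fun t ht => pow_two_pos_of_ne_zero (hy t ht)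
    have hne : (Icc 1 N).Nonempty := Finset.nonempty_Icc.mpr hN
    set m : ℝ := (Icc 1 N).inf' hne (fun t => y t ^ 2) with hm
    have hm0 : 0 < m := (Finset.lt_inf'_iff hne).mpr hA
    have hmle : ∀ t ∈ Icc 1 N, m ≤ y t ^ 2 := fun t ht => Finset.inf'_le _ ht
    by_contra h
    push_neg at h
    obtain ⟨s, hs, hvs⟩ := h
    have key := hmin (fun t => max (v t) m)
    have h1 : ∑ t ∈ Icc 1 N, (y t ^ 2 - max (v t) m) ^ 2
        < ∑ t ∈ Icc 1 N, (y t ^ 2 - v t) ^ 2 := by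
      apply Finset.sum_lt_sum
      · intro i hi
        rcases le_or_gt m (v i) with hc | hc
        · rw [max_eq_left hc]
        · rw [max_eq_right hc.le]
          have := hmle i hi
          nlinarith
      · refine ⟨s, hs, ?_⟩
        rw [max_eq_right (by linarith)]
        have := hmle s hs
        nlinarith
    have h2 : ∑ t ∈ Icc 2 N, |max (v t) m - max (v (t-1)) m|
        ≤ ∑ t ∈ Icc 2 N, |v t - v (t-1)| := by
      apply Finset.sum_le_sum
      intro i _
      exact abs_max_sub_max_le_abs _ _ _
    have h2' := mul_le_mul_of_nonneg_left h2 hlam.le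
    linarith
  refine ⟨hv, ?_⟩
  -- Part 2 : optimality of η = -1/(2v)
  intro η' hη'
  set d : ℕ → ℝ := fun t => η' t - (-(1 / (2 * v t))) with hd
  set w : ℕ → ℝ := fun t => v t - v (t - 1) with hw
  set e : ℕ → ℝ := fun t => d t - d (t - 1) with he
  have hmem : ∀ t ∈ Icc 2 N, t ∈ Icc 1 N ∧ t - 1 ∈ Icc 1 N := by
    intro t ht
    rw [mem_Icc] at ht ⊢
    rw [mem_Icc]
    omega
  set Q : ℝ := ∑ t ∈ Icc 1 N, (v t - y t ^ 2) * d t with hQ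
  set S : ℝ := ∑ t ∈ Icc 2 N, phi17 (w t) (e t) with hS
  set D : ℝ := ∑ t ∈ Icc 1 N, d t ^ 2 with hDD
  -- first-order condition : 0 ≤ Q + lam * S
  have hB : 0 ≤ Q + lam * S := by
    set ρ : ℕ → ℝ := fun t => if t ∈ Icc 2 N ∧ w t ≠ 0 then |w t| / (|e t| + 1) else 1
      with hρ
    set ε₀ : ℝ := (insert 0 (Icc 2 N)).inf' (Finset.insert_nonempty _ _) ρ with hε₀
    have hε₀pos : 0 < ε₀ := by
      rw [hε₀, Finset.lt_inf'_iff]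
      intro i _
      rw [hρ]
      dsimp only
      split_ifs with hc
      · exact div_pos (abs_pos.mpr hc.2) (by positivity)
      · norm_num
    have hε₀lt : ∀ ε, 0 < ε → ε ≤ ε₀ → ∀ t ∈ Icc 2 N, w t ≠ 0 → ε * |e t| < |w t| := by
      intro ε hε hεle t ht hw0
      have h1 : ε₀ ≤ ρ t := Finset.inf'_le _ (mem_insert_of_mem ht)
      rw [hρ] at h1
      simp only [if_pos (And.intro ht hw0)] at h1
      have h2 : ε ≤ |w t| / (|e t| + 1) := le_trans hεle h1
      rw [le_div_iff₀ (by positivity)] at h2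
      nlinarith [abs_nonneg (e t), abs_nonneg (w t)]
    have key : ∀ ε, 0 < ε → ε ≤ ε₀ → 0 ≤ Q + lam * S + ε * (D / 2) := by
      intro ε hε hεle
      have hg := hmin (fun t => v t + ε * d t)
      have e1 : ∑ t ∈ Icc 1 N, (y t ^ 2 - (v t + ε * d t)) ^ 2
          = ∑ t ∈ Icc 1 N, (y t ^ 2 - v t) ^ 2 + ε * (2 * Q) + ε ^ 2 * D := by
        rw [hQ, hDD, Finset.mul_sum, Finset.mul_sum, Finset.mul_sum,
          ← Finset.sum_add_distrib, ← Finset.sum_add_distrib]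
        apply Finset.sum_congr rfl
        intro t _
        ring
      have e2 : ∑ t ∈ Icc 2 N, |(v t + ε * d t) - (v (t-1) + ε * d (t-1))|
          = ∑ t ∈ Icc 2 N, |v t - v (t-1)| + ε * S := by
        rw [hS, Finset.mul_sum, ← Finset.sum_add_distrib]
        apply Finset.sum_congr rfl
        intro t ht
        have hrw : (v t + ε * d t) - (v (t-1) + ε * d (t-1)) = w t + ε * e t := by
          rw [hw, he]; dsimp only; ring
        have habs := aux17_abs (w t) (e t) ε hε (hε₀lt ε hε hεle t ht)
        have hweq : w t = v t - v (t - 1) := by rw [hw]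
        rw [hrw, habs, hweq]
      rw [e1, e2] at hg
      nlinarith [hg]
    have hD0 : 0 ≤ D := Finset.sum_nonneg fun t _ => sq_nonneg _
    by_contra hcon
    push_neg at hcon
    set X : ℝ := Q + lam * S with hX
    set ε : ℝ := min ε₀ ((-X) / (D + 1)) with hε
    have hεpos : 0 < ε := lt_min hε₀pos (div_pos (by linarith) (by linarith))
    have h1 := key ε hεpos (min_le_left _ _)
    have h2 : ε ≤ (-X) / (D + 1) := min_le_right _ _
    rw [le_div_iff₀ (by linarith : (0:ℝ) < D + 1)] at h2
    nlinarith
  -- convexity of smooth part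
  have h1 : ∑ t ∈ Icc 1 N, (-(1/2) * Real.log (-(-(1 / (2 * v t)))) - (-(1 / (2 * v t))) * y t ^ 2) + Q
      ≤ ∑ t ∈ Icc 1 N, (-(1/2) * Real.log (-η' t) - η' t * y t ^ 2) := by
    rw [hQ, ← Finset.sum_add_distrib]
    apply Finset.sum_le_sum
    intro t ht
    have := aux17_smooth (v t) (y t ^ 2) (η' t) (hv t ht) (hη' t ht)
    rw [hd]
    dsimp only
    linarith
  -- TV transfer
  have h2 : ∑ t ∈ Icc 2 N, |(-(1 / (2 * v t))) - (-(1 / (2 * v (t-1))))| + S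
      ≤ ∑ t ∈ Icc 2 N, |η' t - η' (t-1)| := by
    rw [hS, ← Finset.sum_add_distrib]
    apply Finset.sum_le_sum
    intro t ht
    obtain ⟨ht2, ht1⟩ := hmem t ht
    have := aux17_tv (v (t-1)) (v t) (η' (t-1)) (η' t) (hv _ ht1) (hv _ ht2)
    have hweq : w t = v t - v (t-1) := by rw [hw]
    have heeq : e t = (η' t - η' (t-1)) - ((-(1 / (2 * v t))) - (-(1 / (2 * v (t-1))))) := by
      rw [he, hd]; dsimp only; ring
    rw [hweq, heeq]
    linarith
  -- combine
  have hsplit1 : -(1 / 2) * ∑ t ∈ Icc 1 N, Real.log (-(-(1 / (2 * v t))))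
      - ∑ t ∈ Icc 1 N, (-(1 / (2 * v t))) * y t ^ 2
      = ∑ t ∈ Icc 1 N, (-(1/2) * Real.log (-(-(1 / (2 * v t)))) - (-(1 / (2 * v t))) * y t ^ 2) := by
    rw [Finset.sum_sub_distrib, ← Finset.mul_sum]
  have hsplit2 : -(1 / 2) * ∑ t ∈ Icc 1 N, Real.log (-η' t)
      - ∑ t ∈ Icc 1 N, η' t * y t ^ 2
      = ∑ t ∈ Icc 1 N, (-(1/2) * Real.log (-η' t) - η' t * y t ^ 2) := by
    rw [Finset.sum_sub_distrib, ← Finset.mul_sum]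
  have h2' := mul_le_mul_of_nonneg_left h2 hlam.le
  rw [mul_add] at h2'
  rw [hsplit1, hsplit2]
  linarith
end
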